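/- arXiv:2007.08204 — 5 statements merged into one kernel-verified Lean document; each statement's English description precedes it below -/
import Mathlib

section
/- There exist constants C > 0 and ε₀ ∈ (0, 1/4) such that the following holds for every ε ∈ (0, ε₀). Let n ≥ 1, w ∈ ℤ^n, τ ∈ ℤ, α ∈ [0,1], and let A, B ⊆ {0,1}^n satisfy: (i) every a ∈ A has exactly αn coordinates equal to 1; (ii) ⟨w, b⟩ = τ for every b ∈ B; (iii) the map a ↦ ⟨w, a⟩ is injective on A. If |B| ≥ 2^{(1−ε)n}, then |A| ≤ 2^{δn} with δ := C · log₂(log₂(1/ε)) / √(log₂(1/ε)). -/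
open Finset Real

open Finset

private lemma geom2 (r : ℕ) : ∑ j ∈ Finset.range r, (2:ℤ)^j = 2^r - 1 := by
  induction r with
  | zero => simp
  | succ r ih => rw [Finset.sum_range_succ, ih]; ring

private lemma digit_sum_bounds (r : ℕ) (f : ℕ → ℤ) (hf : ∀ j, f j = 0 ∨ f j = 1) :
    0 ≤ ∑ j ∈ Finset.range r, 2^j * f j ∧ ∑ j ∈ Finset.range r, 2^j * f j ≤ 2^r - 1 := by
  constructor
  · apply Finset.sum_nonneg; intro j _
    rcases hf j with h | h <;> simp [h]
  · rw [← geom2 r]; apply Finset.sum_le_sum; intro j _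
    rcases hf j with h | h <;> simp [h]

private lemma digit_unique (r : ℕ) (f g : ℕ → ℤ)
    (hf : ∀ j, f j = 0 ∨ f j = 1) (hg : ∀ j, g j = 0 ∨ g j = 1)
    (h : ∑ j ∈ Finset.range r, 2^j * f j = ∑ j ∈ Finset.range r, 2^j * g j) :
    ∀ j < r, f j = g j := by
  induction r with
  | zero => intro j hj; omega
  | succ r ih =>
    rw [Finset.sum_range_succ, Finset.sum_range_succ] at h
    obtain ⟨h1, h2⟩ := digit_sum_bounds r f hf
    obtain ⟨h3, h4⟩ := digit_sum_bounds r g hg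
    have hpow : (0:ℤ) < 2^r := by positivity
    have hfr : f r = g r := by
      rcases hf r with h5 | h5 <;> rcases hg r with h6 | h6 <;>
        rw [h5, h6] at h ⊢ <;> simp only [mul_zero, mul_one, add_zero] at h <;>
        first
          | rfl
          | linarith
    have h' : ∑ j ∈ Finset.range r, 2^j * f j = ∑ j ∈ Finset.range r, 2^j * g j := by
      rw [hfr] at h; linarith
    intro j hj
    rcases Nat.lt_succ_iff_lt_or_eq.mp hj with hj' | hj'
    · exact ih h' j hj'
    · rw [hj']; exact hfr

private lemma count_lemma {n : ℕ} (r : ℕ) (w : Fin n → ℤ) (τ : ℤ)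
    (A B : Finset (Fin n → ℤ))
    (hA01 : ∀ a ∈ A, ∀ i, a i = 0 ∨ a i = 1)
    (hB01 : ∀ b ∈ B, ∀ i, b i = 0 ∨ b i = 1)
    (hBlevel : ∀ b ∈ B, ∑ i, w i * b i = τ)
    (hAinj : ∀ a ∈ A, ∀ a' ∈ A, ∑ i, w i * a i = ∑ i, w i * a' i → a = a') :
    A.card * B.card ^ r ≤ (2^r + 1)^n := by
  classical
  set Φ : (Fin n → ℤ) × (Fin r → Fin n → ℤ) → (Fin n → ℤ) :=
    fun p => fun i => p.1 i + ∑ j : Fin r, 2^(j:ℕ) * p.2 j i with hΦ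
  -- domain and target
  set P : Finset ((Fin n → ℤ) × (Fin r → Fin n → ℤ)) :=
    A ×ˢ (Fintype.piFinset fun _ : Fin r => B) with hP
  set T : Finset (Fin n → ℤ) := Fintype.piFinset fun _ : Fin n => Finset.Icc (0:ℤ) (2^r)
    with hT
  -- inner product identity
  have hip : ∀ (a : Fin n → ℤ) (bs : Fin r → Fin n → ℤ), (∀ j, bs j ∈ B) →
      ∑ i, w i * Φ (a, bs) i = (∑ i, w i * a i) + (2^r - 1) * τ := by
    intro a bs hbs
    have e1 : ∑ i, w i * Φ (a, bs) i
        = (∑ i, w i * a i) + ∑ i, ∑ j : Fin r, 2^(j:ℕ) * (w i * bs j i) := by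
      simp only [hΦ]
      rw [← Finset.sum_add_distrib]
      apply Finset.sum_congr rfl
      intro i _
      rw [mul_add, Finset.mul_sum]
      congr 1
      apply Finset.sum_congr rfl
      intro j _
      ring
    rw [e1, Finset.sum_comm]
    congr 1
    have e2 : ∀ j : Fin r, ∑ i, 2^(j:ℕ) * (w i * bs j i) = 2^(j:ℕ) * τ := by
      intro j
      rw [← Finset.mul_sum, hBlevel (bs j) (hbs j)]
    rw [Finset.sum_congr rfl (fun j _ => e2 j), ← Finset.sum_mul]
    congr 1
    rw [Fin.sum_univ_eq_sum_range (fun j => (2:ℤ)^j) r, geom2]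
  -- conversion of Fin-sums of digits to range-sums
  have hconv : ∀ (bs : Fin r → Fin n → ℤ) (i : Fin n),
      ∑ j : Fin r, 2^(j:ℕ) * bs j i
        = ∑ m ∈ Finset.range r, 2^m * (if h : m < r then bs ⟨m, h⟩ i else 0) := by
    intro bs i
    rw [← Fin.sum_univ_eq_sum_range (fun m => (2:ℤ)^m * (if h : m < r then bs ⟨m, h⟩ i else 0)) r]
    apply Finset.sum_congr rfl
    intro j _
    simp [j.isLt]
  -- injectivity
  have hinj : Set.InjOn Φ P := by
    intro p hp q hq hpq
    simp only [hP, Finset.mem_coe, Finset.mem_product, Fintype.mem_piFinset] at hp hq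
    have hp1 : p.1 ∈ A := hp.1
    have hq1 : q.1 ∈ A := hq.1
    have hp2 : ∀ j, p.2 j ∈ B := hp.2
    have hq2 : ∀ j, q.2 j ∈ B := hq.2
    have hsum : ∑ i, w i * Φ p i = ∑ i, w i * Φ q i := by rw [hpq]
    rw [show p = (p.1, p.2) from rfl] at hsum
    rw [show q = (q.1, q.2) from rfl] at hsum
    rw [hip p.1 p.2 hp2, hip q.1 q.2 hq2] at hsum
    have h1 : p.1 = q.1 := hAinj p.1 hp1 q.1 hq1 (by linarith)
    have h2 : p.2 = q.2 := by
      funext j i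
      have hi : Φ p i = Φ q i := by rw [hpq]
      simp only [hΦ] at hi
      rw [h1] at hi
      have hdig : ∑ j : Fin r, 2^(j:ℕ) * p.2 j i = ∑ j : Fin r, 2^(j:ℕ) * q.2 j i := by
        linarith
      rw [hconv p.2 i, hconv q.2 i] at hdig
      have := digit_unique r _ _
        (fun m => by
          by_cases h : m < r
          · simp only [dif_pos h]; exact hB01 _ (hp2 ⟨m, h⟩) i
          · simp [h])
        (fun m => by
          by_cases h : m < r
          · simp only [dif_pos h]; exact hB01 _ (hq2 ⟨m, h⟩) i
          · simp [h])
        hdig j.val j.isLt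
      simpa [j.isLt] using this
    exact Prod.ext h1 h2
  -- maps into T
  have hmaps : ∀ p ∈ P, Φ p ∈ T := by
    intro p hp
    simp only [hP, Finset.mem_product, Fintype.mem_piFinset] at hp
    simp only [hT, Fintype.mem_piFinset]
    intro i
    rw [Finset.mem_Icc]
    have ha := hA01 p.1 hp.1 i
    have hb : ∀ j : Fin r, 0 ≤ p.2 j i ∧ p.2 j i ≤ 1 := by
      intro j
      rcases hB01 _ (hp.2 j) i with h | h <;> rw [h] <;> norm_num
    have hs1 : 0 ≤ ∑ j : Fin r, 2^(j:ℕ) * p.2 j i := by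
      apply Finset.sum_nonneg; intro j _
      have := (hb j).1; positivity
    have hs2 : ∑ j : Fin r, 2^(j:ℕ) * p.2 j i ≤ 2^r - 1 := by
      calc ∑ j : Fin r, 2^(j:ℕ) * p.2 j i ≤ ∑ j : Fin r, 2^(j:ℕ) := by
            apply Finset.sum_le_sum; intro j _
            have h1 := (hb j).2
            have h2 : (0:ℤ) < 2^(j:ℕ) := by positivity
            nlinarith
        _ = 2^r - 1 := by rw [Fin.sum_univ_eq_sum_range (fun j => (2:ℤ)^j) r, geom2]
    constructor
    · rcases ha with h | h <;> simp only [hΦ] <;> rw [h] <;> linarith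
    · rcases ha with h | h <;> simp only [hΦ] <;> rw [h] <;> linarith
  -- count
  have hcard := Finset.card_le_card_of_injOn Φ hmaps hinj
  have hPcard : P.card = A.card * B.card ^ r := by
    rw [hP, Finset.card_product, Fintype.card_piFinset]
    simp
  have hTcard : T.card = (2^r + 1)^n := by
    rw [hT, Fintype.card_piFinset]
    have : (Finset.Icc (0:ℤ) (2^r)).card = 2^r + 1 := by
      rw [Int.card_Icc, sub_zero]
      norm_cast
    simp [this]
  rw [hPcard, hTcard] at hcard
  exact hcard

private lemma analytic_core (ε : ℝ) (hε0 : 0 < ε) (hε : ε < 1/8) :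
    ε * (⌈Real.logb 2 (1/ε)⌉₊ : ℝ)
      + Real.logb 2 (1 + 2^(-((⌈Real.logb 2 (1/ε)⌉₊ : ℕ):ℝ)))
      ≤ 100 * Real.logb 2 (Real.logb 2 (1/ε)) / Real.sqrt (Real.logb 2 (1/ε)) := by
  set t : ℝ := Real.logb 2 (1/ε) with ht_def
  set R : ℝ := ((⌈t⌉₊ : ℕ) : ℝ) with hR_def
  have ht3 : 3 < t := by
    have h8 : (8:ℝ) < 1/ε := by rw [lt_div_iff₀ hε0]; linarith
    have h1 : Real.logb 2 8 < Real.logb 2 (1/ε) := Real.logb_lt_logb (by norm_num) (by norm_num) h8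
    have h3 : Real.logb 2 8 = 3 := by
      rw [show (8:ℝ) = 2^(3:ℝ) by norm_num, Real.logb_rpow (by norm_num) (by norm_num)]
    rw [ht_def]; linarith
  have htR : t ≤ R := Nat.le_ceil t
  have hR1 : R < t + 1 := Nat.ceil_lt_add_one (by linarith)
  have hteq : (2:ℝ) ^ t = 1/ε := Real.rpow_logb (by norm_num) (by norm_num) (by positivity)
  have hε_eq : (2:ℝ) ^ (-t) = ε := by
    rw [Real.rpow_neg (by norm_num), hteq]
    field_simp
  have h2mr : (2:ℝ) ^ (-R) ≤ ε := by
    rw [← hε_eq]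
    exact Real.rpow_le_rpow_of_exponent_le (by norm_num) (by linarith)
  have h2mrpos : (0:ℝ) < (2:ℝ)^(-R) := Real.rpow_pos_of_pos (by norm_num) _
  -- log(1+x) ≤ 1.5 x
  have hlog1p : Real.logb 2 (1 + 2^(-R)) ≤ (3/2) * ε := by
    have hx : Real.log (1 + 2^(-R)) ≤ 2^(-R) := by
      have := Real.log_le_sub_one_of_pos (show (0:ℝ) < 1 + 2^(-R) by linarith)
      linarith
    have hlog2 : (0.6931471803 : ℝ) < Real.log 2 := Real.log_two_gt_d9
    rw [Real.logb]
    rw [div_le_iff₀ (by linarith)]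
    nlinarith [Real.log_nonneg (show (1:ℝ) ≤ 1 + 2^(-R) by linarith)]
  -- main: ε * (t+5/2) ≤ 100 logb 2 t / sqrt t
  have hmain : ε * (t + 5/2) ≤ 100 * Real.logb 2 t / Real.sqrt t := by
    have htpos : (0:ℝ) < t := by linarith
    have hsq : (0:ℝ) < Real.sqrt t := Real.sqrt_pos.mpr htpos
    rw [le_div_iff₀ hsq]
    have hsqt : Real.sqrt t ≤ t := by
      nlinarith [Real.sq_sqrt (le_of_lt htpos), Real.sqrt_nonneg t]
    have hlogbt : (1:ℝ) ≤ Real.logb 2 t := by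
      rw [show (1:ℝ) = Real.logb 2 2 by simp]
      exact Real.logb_le_logb_of_le (by norm_num) (by norm_num) (by linarith)
    -- 2^t ≥ (1 + t log 2/3)^3 ≥ (0.231 t)^3
    have hlog2 : (0.6931471803 : ℝ) < Real.log 2 := Real.log_two_gt_d9
    have hy : (0:ℝ) ≤ Real.log 2 * t / 3 := by positivity
    have hexp1 : (1 + Real.log 2 * t / 3)^(3:ℕ) ≤ Real.exp (Real.log 2 * t / 3) ^ (3:ℕ) := by
      apply pow_le_pow_left₀ (by linarith)
      linarith [Real.add_one_le_exp (Real.log 2 * t / 3)]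
    have hexp2 : Real.exp (Real.log 2 * t / 3) ^ (3:ℕ) = Real.exp (Real.log 2 * t) := by
      rw [← Real.exp_nat_mul]
      ring_nf
    have hexp3 : Real.exp (Real.log 2 * t) = (2:ℝ) ^ t := (Real.rpow_def_of_pos (by norm_num) t).symm
    have hpow : (1 + Real.log 2 * t / 3)^(3:ℕ) ≤ (2:ℝ)^t := by
      rw [← hexp3, ← hexp2]; exact hexp1
    -- so (t+5/2) * t ≤ 100 * 2^t
    have hcube : (0.231 * t)^(3:ℕ) ≤ (2:ℝ)^t := by
      apply le_trans _ hpow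
      apply pow_le_pow_left₀ (by linarith)
      nlinarith
    have hkey : (t + 5/2) * t ≤ 100 * (2:ℝ)^t := by
      nlinarith [hcube, sq_nonneg t, htpos]
    -- ε = 2^{-t} = 1/2^t
    have h2tpos : (0:ℝ) < (2:ℝ)^t := Real.rpow_pos_of_pos (by norm_num) t
    have hεinv : ε * (2:ℝ)^t = 1 := by
      rw [hteq]; field_simp
    calc ε * (t + 5/2) * Real.sqrt t ≤ ε * (t + 5/2) * t := by
          apply mul_le_mul_of_nonneg_left hsqt
          positivity
      _ ≤ 100 := by
          have := mul_le_mul_of_nonneg_left hkey (le_of_lt hε0)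
          calc ε * (t + 5/2) * t = ε * ((t + 5/2) * t) := by ring
            _ ≤ ε * (100 * 2^t) := this
            _ = 100 * (ε * 2^t) := by ring
            _ = 100 := by rw [hεinv]; norm_num
      _ ≤ 100 * Real.logb 2 t := by linarith
  calc ε * R + Real.logb 2 (1 + 2^(-R)) ≤ ε * (t+1) + (3/2) * ε := by
        have : ε * R ≤ ε * (t+1) := by
          apply mul_le_mul_of_nonneg_left (by linarith) (le_of_lt hε0)
        linarith
    _ = ε * (t + 5/2) := by ring
    _ ≤ 100 * Real.logb 2 t / Real.sqrt t := hmain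


/-- Reformulation of the Littlewood–Offord theorem with two families
`A, B ⊆ {0,1}^n ⊆ ℤ^n`: if every `a ∈ A` has exactly `αn` ones, every `b ∈ B` has
`⟨w,b⟩ = τ`, the map `a ↦ ⟨w,a⟩` is injective on `A`, and `|B| ≥ 2^((1-ε)n)`, then
`|A| ≤ 2^(δn)` with `δ = C · log₂(log₂(1/ε)) / √(log₂(1/ε))`. -/
theorem stmt_1 :
    ∃ C : ℝ, 0 < C ∧ ∃ ε₀ : ℝ, 0 < ε₀ ∧ ε₀ < 1/4 ∧
      ∀ ε : ℝ, 0 < ε → ε < ε₀ →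
      ∀ n : ℕ, 1 ≤ n → ∀ w : Fin n → ℤ, ∀ τ : ℤ, ∀ α : ℝ, 0 ≤ α → α ≤ 1 →
      ∀ A B : Finset (Fin n → ℤ),
        (∀ a ∈ A, ∀ i, a i = 0 ∨ a i = 1) →
        (∀ b ∈ B, ∀ i, b i = 0 ∨ b i = 1) →
        (∀ a ∈ A, ((Finset.univ.filter (fun i => a i = 1)).card : ℝ) = α * n) →
        (∀ b ∈ B, ∑ i, w i * b i = τ) →
        (∀ a ∈ A, ∀ a' ∈ A, ∑ i, w i * a i = ∑ i, w i * a' i → a = a') →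
        (2:ℝ) ^ ((1 - ε) * (n:ℝ)) ≤ (B.card : ℝ) →
        (A.card : ℝ) ≤ (2:ℝ) ^ ((C * Real.logb 2 (Real.logb 2 (1/ε)) /
          Real.sqrt (Real.logb 2 (1/ε))) * (n:ℝ)) := by
  refine ⟨100, by norm_num, 1/8, by norm_num, by norm_num, ?_⟩
  intro ε hε0 hε n hn w τ α hα0 hα1 A B hA01 hB01 hslice hBlevel hAinj hBcard
  have hcore := analytic_core ε hε0 hε
  set t : ℝ := Real.logb 2 (1/ε) with ht_def
  set r : ℕ := ⌈t⌉₊ with hr_def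
  set R : ℝ := (r : ℝ) with hR_def
  set δ : ℝ := 100 * Real.logb 2 t / Real.sqrt t with hδ_def
  have hδcore : ε * R + Real.logb 2 (1 + 2^(-R)) ≤ δ := hcore
  -- counting step
  have hcardNat := count_lemma r w τ A B hA01 hB01 hBlevel hAinj
  have hc1 : (A.card : ℝ) * (B.card : ℝ)^r ≤ ((2:ℝ)^(r:ℕ) + 1)^n := by
    exact_mod_cast hcardNat
  rw [← Real.rpow_natCast 2 r] at hc1
  -- base inequality
  have hbase : (2:ℝ)^R + 1 ≤ (2:ℝ)^(δ + (1-ε)*R) := by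
    have h1 : (1:ℝ) + 2^(-R) ≤ 2^(δ - ε*R) := by
      have hlogb : Real.logb 2 (1 + 2^(-R)) ≤ δ - ε*R := by linarith
      have hpos : (0:ℝ) < 1 + 2^(-R) := by
        have : (0:ℝ) < (2:ℝ)^(-R) := Real.rpow_pos_of_pos (by norm_num) _
        linarith
      calc (1:ℝ) + 2^(-R) = 2 ^ (Real.logb 2 (1 + 2^(-R))) :=
            (Real.rpow_logb (by norm_num) (by norm_num) hpos).symm
        _ ≤ 2^(δ - ε*R) := Real.rpow_le_rpow_of_exponent_le (by norm_num) hlogb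
    calc (2:ℝ)^R + 1 = 2^R * (1 + 2^(-R)) := by
          rw [mul_add, mul_one, ← Real.rpow_add (by norm_num), add_neg_cancel,
            Real.rpow_zero]
      _ ≤ 2^R * 2^(δ - ε*R) := by
          apply mul_le_mul_of_nonneg_left h1
          positivity
      _ = 2^(δ + (1-ε)*R) := by
          rw [← Real.rpow_add (by norm_num)]
          ring_nf
  -- B lower bound power
  set X : ℝ := (2:ℝ) ^ ((1 - ε) * (n:ℝ)) with hX_def
  have hXpos : (0:ℝ) < X := Real.rpow_pos_of_pos (by norm_num) _
  have hBr : X^r ≤ (B.card : ℝ)^r := pow_le_pow_left₀ (le_of_lt hXpos) hBcard r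
  -- exponent juggling
  have hXr : X^r = (2:ℝ)^((1-ε)*(n:ℝ)*R) := by
    rw [hX_def, ← Real.rpow_natCast ((2:ℝ)^((1-ε)*(n:ℝ))) r, ← Real.rpow_mul (by norm_num)]
  have hpow_n : ((2:ℝ)^(δ + (1-ε)*R))^n = (2:ℝ)^(δ*(n:ℝ)) * X^r := by
    rw [← Real.rpow_natCast ((2:ℝ)^(δ + (1-ε)*R)) n, ← Real.rpow_mul (by norm_num), hXr,
      ← Real.rpow_add (by norm_num)]
    ring_nf
  -- chain
  have hchain : (A.card : ℝ) * X^r ≤ (2:ℝ)^(δ*(n:ℝ)) * X^r := by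
    calc (A.card : ℝ) * X^r ≤ (A.card : ℝ) * (B.card : ℝ)^r := by
          apply mul_le_mul_of_nonneg_left hBr (by positivity)
      _ ≤ ((2:ℝ)^R + 1)^n := hc1
      _ ≤ ((2:ℝ)^(δ + (1-ε)*R))^n := by
          apply pow_le_pow_left₀ (by positivity) hbase
      _ = (2:ℝ)^(δ*(n:ℝ)) * X^r := hpow_n
  have hfinal : (A.card : ℝ) ≤ (2:ℝ)^(δ*(n:ℝ)) :=
    le_of_mul_le_mul_right hchain (by positivity)
  calc (A.card : ℝ) ≤ (2:ℝ)^(δ*(n:ℝ)) := hfinal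
    _ = (2:ℝ) ^ ((100 * Real.logb 2 t / Real.sqrt t) * (n:ℝ)) := by rw [hδ_def]
end

section
/- Let Ω be a finite nonempty set, p : Ω → [0,1] with Σ_{ω∈Ω} p(ω) = 1, let γ ∈ (0, 1/4], and let U be a finite nonempty set. Then the number of vectors v ∈ Ω^U that are γ-p-balanced for U is at most |U|^{|Ω|} · 2^{(h(p) + |Ω|·γ·log₂(1/γ))·|U|}. -/
/-- The (base-2) entropy of a probability function `p` on a finite set `Ω`
(with the convention `0·log₂ 0 = 0`, which holds automatically for `Real.logb`). -/
noncomputable def entropy {Ω : Type*} [Fintype Ω] (p : Ω → ℝ) : ℝ :=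
  -∑ ω, p ω * Real.logb 2 (p ω)


section Helpers
open Real Finset

lemma negMulLog_subadd {a b : ℝ} (ha : 0 ≤ a) (hb : 0 ≤ b) :
    Real.negMulLog (a + b) ≤ Real.negMulLog a + Real.negMulLog b := by
  rcases eq_or_lt_of_le ha with h | ha'
  · simp [← h]
  rcases eq_or_lt_of_le hb with h | hb'
  · simp [← h]
  simp only [Real.negMulLog, neg_mul]
  have h1 : a * Real.log a ≤ a * Real.log (a + b) :=
    mul_le_mul_of_nonneg_left (Real.log_le_log ha' (by linarith)) ha
  have h2 : b * Real.log b ≤ b * Real.log (a + b) :=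
    mul_le_mul_of_nonneg_left (Real.log_le_log hb' (by linarith)) hb
  nlinarith [add_mul a b (Real.log (a + b))]

lemma log_quarter_le : Real.log (1/4 : ℝ) ≤ -1 := by
  rw [show (1/4:ℝ) = 4⁻¹ by norm_num, Real.log_inv]
  have : (1:ℝ) ≤ Real.log 4 := by
    rw [Real.le_log_iff_exp_le (by norm_num)]
    have := Real.exp_one_lt_d9
    linarith
  linarith

lemma negMulLog_mono_quarter {a b : ℝ} (ha : 0 ≤ a) (hab : a ≤ b) (hb : b ≤ 1/4) :
    Real.negMulLog a ≤ Real.negMulLog b := by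
  rcases eq_or_lt_of_le ha with h | ha'
  · simp [← h]; exact Real.negMulLog_nonneg (by linarith) (by linarith)
  have hb' : 0 < b := lt_of_lt_of_le ha' hab
  set t : ℝ := a / b with ht
  have ht0 : 0 < t := div_pos ha' hb'
  have ht1 : t ≤ 1 := (div_le_one hb').mpr hab
  have hlog : -Real.log t ≤ t⁻¹ - 1 := by
    have := Real.log_le_sub_one_of_pos (inv_pos.mpr ht0)
    rwa [Real.log_inv] at this
  have hlogb : Real.log b ≤ -1 := le_trans (Real.log_le_log hb' hb) log_quarter_le
  have ha_eq : a = t * b := by rw [ht, div_mul_cancel₀ a (ne_of_gt hb')]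
  have hloga : Real.log a = Real.log t + Real.log b := by
    rw [ha_eq, Real.log_mul (ne_of_gt ht0) (ne_of_gt hb')]
  simp only [Real.negMulLog, neg_mul]
  rw [hloga]
  -- want: -(a*(log t + log b)) ≤ -(b * log b)
  -- i.e. b*log b - a*log t - a*log b ≤ 0 ... use a = t*b
  rw [ha_eq]
  have h1 : -(t*b*Real.log t) ≤ b*(1-t) := by
    have h3 : t * (t⁻¹ - 1) = 1 - t := by field_simp
    nlinarith [mul_le_mul_of_nonneg_left hlog (le_of_lt ht0)]
  nlinarith

lemma negMulLog_key {p q γ : ℝ} (hp0 : 0 ≤ p) (hp1 : p ≤ 1) (hq0 : 0 ≤ q) (hq1 : q ≤ 1)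
    (hγ0 : 0 < γ) (hγ1 : γ ≤ 1/4) (hlo : p - γ ≤ q) (hhi : q ≤ p + γ) :
    Real.negMulLog q ≤ Real.negMulLog p + Real.negMulLog γ := by
  have hFγ : γ ≤ Real.negMulLog γ := by
    have hlogγ : Real.log γ ≤ -1 := le_trans (Real.log_le_log hγ0 hγ1) log_quarter_le
    simp only [Real.negMulLog, neg_mul]
    nlinarith
  rcases le_or_gt q p with h | h
  · rcases eq_or_lt_of_le hq0 with h0 | hq0'
    · simp [← h0]
      have := Real.negMulLog_nonneg hp0 hp1
      have := Real.negMulLog_nonneg (le_of_lt hγ0) (by linarith)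
      linarith
    have hp0' : 0 < p := lt_of_lt_of_le hq0' h
    have hrat : Real.log (p/q) ≤ p/q - 1 := Real.log_le_sub_one_of_pos (div_pos hp0' hq0')
    have hlp : Real.log p ≤ 0 := Real.log_nonpos hp0 hp1
    have hlog : Real.log p = Real.log (p/q) + Real.log q := by
      rw [← Real.log_mul (by positivity) (ne_of_gt hq0')]
      congr 1; field_simp
    -- F q - F p = q*log(p/q) + (p-q)*log p ≤ p - q ≤ γ ≤ F γ
    have key : Real.negMulLog q - Real.negMulLog p ≤ p - q := by
      simp only [Real.negMulLog, neg_mul]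
      rw [hlog]
      have h1 : q * Real.log (p/q) ≤ q * (p/q - 1) :=
        mul_le_mul_of_nonneg_left hrat hq0
      have h2 : q * (p/q - 1) = p - q := by field_simp
      nlinarith
    linarith
  · have : Real.negMulLog q = Real.negMulLog (p + (q - p)) := by ring_nf
    rw [this]
    have h1 := negMulLog_subadd hp0 (by linarith : (0:ℝ) ≤ q - p)
    have h2 := negMulLog_mono_quarter (by linarith : (0:ℝ) ≤ q - p) (by linarith) hγ1
    linarith

lemma fiber_card_le {Ω U : Type*} [Fintype Ω] [DecidableEq Ω] [Fintype U] [DecidableEq U]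
    (hn : 0 < Fintype.card U) (k : Ω → ℕ) (hk : ∑ ω, k ω = Fintype.card U) :
    ((univ.filter (fun v : U → Ω =>
        ∀ ω, (univ.filter (fun i => v i = ω)).card = k ω)).card : ℝ)
      ≤ ∏ ω, (if k ω = 0 then 1 else ((Fintype.card U : ℝ) / k ω) ^ (k ω)) := by
  set n := Fintype.card U with hndef
  set q : Ω → ℝ := fun ω => (k ω : ℝ) / n with hqdef
  have hn' : (0:ℝ) < n := by exact_mod_cast hn
  have hq0 : ∀ ω, 0 ≤ q ω := fun ω => by positivity
  have hqsum : ∑ ω, q ω = 1 := by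
    rw [hqdef, ← Finset.sum_div]
    rw [show ∑ ω, (k ω : ℝ) = (n:ℝ) by exact_mod_cast congrArg Nat.cast hk]
    field_simp
  -- total sum over all vectors is 1
  have htot : ∑ v : U → Ω, ∏ i, q (v i) = 1 := by
    have h := Finset.prod_univ_sum (fun _ : U => (univ : Finset Ω)) (fun _ ω => q ω)
    rw [Fintype.piFinset_univ] at h
    rw [← h]
    simp [hqsum]
  -- each vector in the fiber contributes ∏ ω, q ω ^ k ω
  have hfib : ∀ v : U → Ω, (∀ ω, (univ.filter (fun i => v i = ω)).card = k ω) →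
      ∏ i, q (v i) = ∏ ω, q ω ^ k ω := by
    intro v hv
    have h := Finset.prod_fiberwise_of_maps_to
      (fun i (_ : i ∈ (univ : Finset U)) => Finset.mem_univ (v i)) (fun i => q (v i))
    rw [← h]
    refine Finset.prod_congr rfl fun ω _ => ?_
    rw [← hv ω]
    rw [Finset.prod_congr rfl (fun i hi => ?_), Finset.prod_const]
    · rw [Finset.mem_filter] at hi
      rw [hi.2]
  set P : ℝ := ∏ ω, q ω ^ k ω with hP
  have hPpos : 0 < P := by
    refine Finset.prod_pos fun ω _ => ?_
    rcases Nat.eq_zero_or_pos (k ω) with h | h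
    · simp [h]
    · have : (0:ℝ) < k ω := by exact_mod_cast h
      positivity
  have hsub : ((univ.filter (fun v : U → Ω =>
      ∀ ω, (univ.filter (fun i => v i = ω)).card = k ω)).card : ℝ) * P ≤ 1 := by
    rw [← htot]
    calc ((univ.filter (fun v : U → Ω =>
          ∀ ω, (univ.filter (fun i => v i = ω)).card = k ω)).card : ℝ) * P
        = ∑ v ∈ univ.filter (fun v : U → Ω =>
            ∀ ω, (univ.filter (fun i => v i = ω)).card = k ω), ∏ i, q (v i) := by
          rw [Finset.sum_congr rfl (fun v hv => hfib v (Finset.mem_filter.mp hv).2),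
            Finset.sum_const, nsmul_eq_mul]
      _ ≤ ∑ v : U → Ω, ∏ i, q (v i) := by
          refine Finset.sum_le_sum_of_subset_of_nonneg (Finset.filter_subset _ _)
            fun v _ _ => Finset.prod_nonneg fun i _ => hq0 _
  have hPinv : P⁻¹ = ∏ ω, (if k ω = 0 then 1 else ((n : ℝ) / k ω) ^ (k ω)) := by
    rw [hP, ← Finset.prod_inv_distrib]
    refine Finset.prod_congr rfl fun ω _ => ?_
    rcases Nat.eq_zero_or_pos (k ω) with h | h
    · simp [h]
    · have hk0 : (0:ℝ) < k ω := by exact_mod_cast h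
      rw [if_neg (Nat.pos_iff_ne_zero.mp h), ← inv_pow, hqdef]
      congr 1
      field_simp
  rw [← hPinv, inv_eq_one_div, le_div_iff₀ hPpos]
  exact hsub

lemma pow_le_exp_entropy {n k : ℕ} (hn : 0 < n) (hkn : k ≤ n) {p γ : ℝ}
    (hp0 : 0 ≤ p) (hp1 : p ≤ 1) (hγ0 : 0 < γ) (hγ1 : γ ≤ 1/4)
    (hlo : (p - γ) * n ≤ (k:ℝ)) (hhi : (k:ℝ) ≤ (p + γ) * n)
    (hkey : ∀ q : ℝ, 0 ≤ q → q ≤ 1 → p - γ ≤ q → q ≤ p + γ →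
      Real.negMulLog q ≤ Real.negMulLog p + Real.negMulLog γ) :
    (if k = 0 then 1 else ((n : ℝ) / k) ^ k) ≤
      Real.exp ((n:ℝ) * (Real.negMulLog p + Real.negMulLog γ)) := by
  have hn' : (0:ℝ) < n := by exact_mod_cast hn
  set q : ℝ := (k:ℝ) / n with hq
  have hq0 : 0 ≤ q := by positivity
  have hq1 : q ≤ 1 := by
    rw [hq, div_le_one hn']; exact_mod_cast hkn
  have hqlo : p - γ ≤ q := (le_div_iff₀ hn').mpr hlo
  have hqhi : q ≤ p + γ := (div_le_iff₀ hn').mpr hhi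
  have key := hkey q hq0 hq1 hqlo hqhi
  have hrhs : 0 ≤ Real.negMulLog p + Real.negMulLog γ := by
    have h1 := Real.negMulLog_nonneg hp0 hp1
    have h2 := Real.negMulLog_nonneg (le_of_lt hγ0) (by linarith)
    linarith
  rcases Nat.eq_zero_or_pos k with h | h
  · rw [if_pos h, show (1:ℝ) = Real.exp 0 by simp]
    exact Real.exp_le_exp.mpr (by positivity)
  · rw [if_neg (Nat.pos_iff_ne_zero.mp h)]
    have hk' : (0:ℝ) < k := by exact_mod_cast h
    have hd : (0:ℝ) < (n:ℝ)/k := by positivity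
    have heq : ((n : ℝ) / k) ^ k = Real.exp ((k:ℝ) * Real.log ((n:ℝ)/k)) := by
      rw [Real.exp_nat_mul, Real.exp_log hd]
    rw [heq]
    refine Real.exp_le_exp.mpr ?_
    have hlogq : Real.log ((n:ℝ)/k) = - Real.log q := by
      rw [hq, ← Real.log_inv]
      congr 1
      field_simp
    have hFq : (k:ℝ) * Real.log ((n:ℝ)/k) = (n:ℝ) * Real.negMulLog q := by
      rw [hlogq, Real.negMulLog, hq]
      field_simp
    rw [hFq]
    exact mul_le_mul_of_nonneg_left key (le_of_lt hn')

end Helpers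

open Real Finset in
/-- For a finite nonempty `Ω`, probability function `p`, `γ ∈ (0,1/4]`, and
finite nonempty index set `U`, the number of `γ`-`p`-balanced vectors `v ∈ Ω^U` is at most
`|U|^{|Ω|} · 2^{(h(p) + |Ω|·γ·log₂(1/γ))·|U|}`. -/
theorem stmt_3 (Ω : Type*) [Fintype Ω] [DecidableEq Ω] [Nonempty Ω]
    (U : Type*) [Fintype U] [DecidableEq U] [Nonempty U]
    (p : Ω → ℝ) (hp0 : ∀ ω, 0 ≤ p ω) (hp1 : ∀ ω, p ω ≤ 1)
    (hpsum : ∑ ω, p ω = 1) (γ : ℝ) (hγ0 : 0 < γ) (hγ1 : γ ≤ 1/4) :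
    (Nat.card {v : U → Ω // ∀ ω : Ω,
        (p ω - γ) * (Fintype.card U : ℝ) ≤
          ((Finset.univ.filter (fun i : U => v i = ω)).card : ℝ) ∧
        ((Finset.univ.filter (fun i : U => v i = ω)).card : ℝ) ≤
          (p ω + γ) * (Fintype.card U : ℝ)} : ℝ) ≤
      (Fintype.card U : ℝ) ^ (Fintype.card Ω) *
        (2:ℝ) ^ ((entropy p + (Fintype.card Ω : ℝ) * γ * Real.logb 2 (1/γ)) *
          (Fintype.card U : ℝ)) := by
  classical
  have hn : 0 < Fintype.card U := Fintype.card_pos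
  have hn' : (0:ℝ) < Fintype.card U := by exact_mod_cast hn
  set n := Fintype.card U with hndef
  set m := Fintype.card Ω with hmdef
  set c : (U → Ω) → Ω → ℕ := fun v ω => (univ.filter (fun i => v i = ω)).card with hc
  set Pred : (U → Ω) → Prop := fun v => ∀ ω : Ω,
      (p ω - γ) * (n:ℝ) ≤ (c v ω : ℝ) ∧ (c v ω : ℝ) ≤ (p ω + γ) * (n:ℝ) with hPred
  -- convert Nat.card to Finset card
  have hcard : (Nat.card {v : U → Ω // Pred v} : ℝ) = ((univ.filter Pred).card : ℝ) := by
    rw [Nat.card_eq_fintype_card, Fintype.card_subtype]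
  rw [show (Nat.card {v : U → Ω // ∀ ω : Ω,
        (p ω - γ) * (Fintype.card U : ℝ) ≤
          ((Finset.univ.filter (fun i : U => v i = ω)).card : ℝ) ∧
        ((Finset.univ.filter (fun i : U => v i = ω)).card : ℝ) ≤
          (p ω + γ) * (Fintype.card U : ℝ)}) = Nat.card {v : U → Ω // Pred v} from rfl,
    hcard]
  -- the type set
  set a : Ω → ℕ := fun ω => ⌈max 0 ((p ω - γ) * n)⌉₊ with ha
  set b : Ω → ℕ := fun ω => ⌊(p ω + γ) * n⌋₊ with hb
  set K : Finset (Ω → ℕ) := Fintype.piFinset (fun ω => Finset.Icc (a ω) (b ω)) with hK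
  have hmaps : ∀ v ∈ univ.filter Pred, c v ∈ K := by
    intro v hv
    rw [Finset.mem_filter] at hv
    rw [hK, Fintype.mem_piFinset]
    intro ω
    rw [Finset.mem_Icc]
    obtain ⟨h1, h2⟩ := hv.2 ω
    constructor
    · rw [ha]
      exact Nat.ceil_le.mpr (max_le (by exact_mod_cast Nat.zero_le _) h1)
    · exact Nat.le_floor h2
  have hsplit : (univ.filter Pred).card = ∑ k ∈ K, ((univ.filter Pred).filter
      (fun v => c v = k)).card := Finset.card_eq_sum_card_fiberwise hmaps
  set M : ℝ := Real.exp ((n:ℝ) * ∑ ω, (Real.negMulLog (p ω) + Real.negMulLog γ)) with hM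
  have hfiber : ∀ k ∈ K, (((univ.filter Pred).filter (fun v => c v = k)).card : ℝ) ≤ M := by
    intro k _
    rcases Finset.eq_empty_or_nonempty ((univ.filter Pred).filter (fun v => c v = k)) with
      h | ⟨v, hv⟩
    · rw [h]; simp; positivity
    rw [Finset.mem_filter, Finset.mem_filter] at hv
    obtain ⟨⟨_, hvPred⟩, hvk⟩ := hv
    have hksum : ∑ ω, k ω = n := by
      rw [← hvk]
      have := Finset.card_eq_sum_card_fiberwise
        (fun i (_ : i ∈ (univ : Finset U)) => Finset.mem_univ (v i))
      rw [← this, Finset.card_univ]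
    have hsub : ((univ.filter Pred).filter (fun v => c v = k)) ⊆
        univ.filter (fun v : U → Ω => ∀ ω, (univ.filter (fun i => v i = ω)).card = k ω) := by
      intro w hw
      rw [Finset.mem_filter] at hw ⊢
      exact ⟨Finset.mem_univ _, fun ω => by rw [← hw.2]⟩
    calc (((univ.filter Pred).filter (fun v => c v = k)).card : ℝ)
        ≤ ((univ.filter (fun v : U → Ω =>
            ∀ ω, (univ.filter (fun i => v i = ω)).card = k ω)).card : ℝ) := by
          exact_mod_cast Finset.card_le_card hsub
      _ ≤ ∏ ω, (if k ω = 0 then 1 else ((n : ℝ) / k ω) ^ (k ω)) := fiber_card_le hn k hksum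
      _ ≤ ∏ ω, Real.exp ((n:ℝ) * (Real.negMulLog (p ω) + Real.negMulLog γ)) := by
          refine Finset.prod_le_prod (fun ω _ => ?_) (fun ω _ => ?_)
          · split <;> positivity
          · have hkn : k ω ≤ n := by
              rw [← hksum]
              exact Finset.single_le_sum (fun _ _ => Nat.zero_le _) (Finset.mem_univ ω)
            have hlo' : (p ω - γ) * (n:ℝ) ≤ (k ω : ℝ) := by
              rw [← hvk]; exact (hvPred ω).1
            have hhi' : (k ω : ℝ) ≤ (p ω + γ) * (n:ℝ) := by
              rw [← hvk]; exact (hvPred ω).2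
            exact pow_le_exp_entropy hn hkn (hp0 ω) (hp1 ω) hγ0 hγ1 hlo' hhi'
              (fun q hq0 hq1 hqlo hqhi =>
                negMulLog_key (hp0 ω) (hp1 ω) hq0 hq1 hγ0 hγ1 hqlo hqhi)
      _ = M := by rw [hM, ← Real.exp_sum, Finset.mul_sum]
  have hKcard : (K.card : ℝ) ≤ (n:ℝ) ^ m := by
    have h1 : K.card ≤ n ^ m := by
      rw [hK, Fintype.card_piFinset]
      calc ∏ ω, (Finset.Icc (a ω) (b ω)).card ≤ ∏ _ω : Ω, n := by
            refine Finset.prod_le_prod' fun ω _ => ?_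
            rw [Nat.card_Icc]
            have hba : b ω < a ω + n := by
              have hbr : (b ω : ℝ) ≤ (p ω + γ) * n :=
                Nat.floor_le (by nlinarith [hp0 ω])
              have har : max 0 ((p ω - γ) * n) ≤ (a ω : ℝ) := Nat.le_ceil _
              have : (b ω : ℝ) < (a ω : ℝ) + n := by
                rcases le_or_gt γ (p ω) with h | h
                · have : (p ω - γ) * n ≤ (a ω : ℝ) := le_trans (le_max_right _ _) har
                  nlinarith
                · have ha0 : (0:ℝ) ≤ (a ω : ℝ) := by positivity
                  nlinarith
              exact_mod_cast this
            omega
        _ = n ^ m := by rw [Finset.prod_const, Finset.card_univ, ← hmdef]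
    exact_mod_cast h1
  have hMpos : 0 ≤ M := le_of_lt (Real.exp_pos _)
  have hmain : ((univ.filter Pred).card : ℝ) ≤ (n:ℝ) ^ m * M := by
    rw [hsplit]
    push_cast
    calc (∑ k ∈ K, (((univ.filter Pred).filter (fun v => c v = k)).card : ℝ))
        ≤ ∑ _k ∈ K, M := Finset.sum_le_sum hfiber
      _ = K.card * M := by rw [Finset.sum_const, nsmul_eq_mul]
      _ ≤ (n:ℝ) ^ m * M := mul_le_mul_of_nonneg_right hKcard hMpos
  refine le_trans hmain (le_of_eq ?_)
  congr 1
  -- M = 2 ^ (E * n)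
  rw [hM, Real.rpow_def_of_pos two_pos]
  congr 1
  have hlog2 : Real.log 2 ≠ 0 := ne_of_gt (Real.log_pos one_lt_two)
  have hent : Real.log 2 * entropy p = ∑ ω, Real.negMulLog (p ω) := by
    rw [entropy]
    rw [show ∀ x:ℝ, Real.log 2 * -x = -(Real.log 2 * x) from fun x => by ring]
    rw [Finset.mul_sum]
    rw [← Finset.sum_neg_distrib]
    refine Finset.sum_congr rfl fun ω _ => ?_
    rw [Real.logb, Real.negMulLog]
    field_simp
  have hγterm : Real.log 2 * (γ * Real.logb 2 (1/γ)) = Real.negMulLog γ := by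
    rw [Real.logb, one_div, Real.log_inv, Real.negMulLog]
    field_simp
  rw [Finset.sum_add_distrib, Finset.sum_const, Finset.card_univ, ← hmdef, nsmul_eq_mul]
  have expand : Real.log 2 * ((entropy p + (m:ℝ) * γ * Real.logb 2 (1/γ)) * (n:ℝ)) =
      (n:ℝ) * (Real.log 2 * entropy p + (m:ℝ) * (Real.log 2 * (γ * Real.logb 2 (1/γ)))) := by
    ring
  rw [expand, hent, hγterm]
end

section
/- Let k ≥ 1, ε ∈ (0, 1/4^{k+2}), γ := 4·√ε, n ≥ 1, and let B ⊆ {0,1}^n satisfy |B| ≥ 2^{k+1}·(n+1)·2^{(1−ε)n}. Then the number of k-tuples (b_1,…,b_k) ∈ B^k such that for every z ∈ {0,1}^k the set {i ∈ {1,…,n} : b_j(i) = z_j for all j ∈ {1,…,k}} has size in [n/2^k − γn, n/2^k + γn] is at least (|B|/2)^k. -/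
open Finset

section Aux
open scoped Classical

lemma mgf_id (n : ℕ) (S : Finset (Fin n)) (s : ℝ) :
    ∑ b : Fin n → Bool, Real.exp (s * ((S.filter (fun i => b i = true)).card : ℝ))
      = 2 ^ n * Real.exp (s * S.card / 2) * Real.cosh (s/2) ^ S.card := by
  have key : ∀ b : Fin n → Bool, Real.exp (s * ((S.filter (fun i => b i = true)).card : ℝ))
      = ∏ i, (if i ∈ S then (if b i then Real.exp s else 1) else 1) := by
    intro b
    have : ((S.filter (fun i => b i = true)).card : ℝ)
        = ∑ i, (if i ∈ S then (if b i then (1:ℝ) else 0) else 0) := by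
      rw [Finset.card_filter]
      push_cast
      rw [Finset.sum_ite_mem, Finset.univ_inter]
    rw [this, Finset.mul_sum, Real.exp_sum]
    apply Finset.prod_congr rfl
    intro i _
    split_ifs <;> simp
  rw [Finset.sum_congr rfl (fun b _ => key b)]
  have swap : (∑ b : Fin n → Bool, ∏ i, (if i ∈ S then (if b i then Real.exp s else 1) else 1))
      = ∏ i : Fin n, ∑ c : Bool, (if i ∈ S then (if c then Real.exp s else 1) else 1) := by
    rw [Finset.prod_univ_sum]
    rw [← Fintype.piFinset_univ]
  rw [swap]
  have step : ∀ i : Fin n, (∑ c : Bool, (if i ∈ S then (if c then Real.exp s else 1) else 1))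
      = if i ∈ S then 1 + Real.exp s else 2 := by
    intro i; split_ifs <;> simp [Fintype.sum_bool]; ring
  rw [Finset.prod_congr rfl (fun i _ => step i)]
  rw [Finset.prod_ite, Finset.prod_const, Finset.prod_const]
  have h1 : (univ.filter (fun i => i ∈ S)) = S := by simp
  have h2 : (univ.filter (fun i => ¬ i ∈ S)).card = n - S.card := by
    rw [Finset.filter_not, Finset.filter_mem_eq_inter, Finset.univ_inter,
      Finset.card_sdiff_of_subset (Finset.subset_univ S)]
    simp
  rw [h1, h2]
  have hm : S.card ≤ n := by simpa using Finset.card_le_card (Finset.subset_univ S)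
  have hcosh : 1 + Real.exp s = 2 * Real.exp (s/2) * Real.cosh (s/2) := by
    rw [Real.cosh_eq]
    have e1 : Real.exp (s/2) * Real.exp (s/2) = Real.exp s := by rw [← Real.exp_add]; ring_nf
    have e2 : Real.exp (s/2) * Real.exp (-s/2) = 1 := by
      rw [← Real.exp_add]; ring_nf; exact Real.exp_zero
    field_simp
    rw [neg_div] at e2
    nlinarith [e1, e2]
  rw [hcosh]
  rw [mul_pow, mul_pow, ← Real.exp_nat_mul]
  rw [← pow_sub_mul_pow (2:ℝ) hm]
  ring_nf

lemma tail_upper (n : ℕ) (S : Finset (Fin n)) (t : ℝ) (ht : 0 < t) :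
    (((univ.filter (fun b : Fin n → Bool =>
        (S.card:ℝ)/2 + t ≤ ((S.filter (fun i => b i = true)).card : ℝ))).card : ℝ))
      ≤ 2^n * Real.exp (-2*t^2/n) := by
  rcases Nat.eq_zero_or_pos S.card with hm | hm
  · have : (univ.filter (fun b : Fin n → Bool =>
        (S.card:ℝ)/2 + t ≤ ((S.filter (fun i => b i = true)).card : ℝ))) = ∅ := by
      apply Finset.filter_false_of_mem
      intro b _
      have h1 : ((S.filter (fun i => b i = true)).card : ℝ) ≤ (S.card : ℝ) := by
        exact_mod_cast Finset.card_le_card (Finset.filter_subset _ _)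
      rw [hm] at h1 ⊢
      push_cast at h1 ⊢
      linarith
    rw [this]
    simp only [Finset.card_empty, Nat.cast_zero]
    positivity
  · set m := S.card with hmdef
    have hmn : m ≤ n := by simpa using Finset.card_le_card (Finset.subset_univ S)
    have hm0 : (0:ℝ) < m := by exact_mod_cast hm
    have hn0 : (0:ℝ) < n := lt_of_lt_of_le hm0 (by exact_mod_cast hmn)
    set s : ℝ := 4*t/m with hsdef
    have hs : 0 < s := by positivity
    set F := univ.filter (fun b : Fin n → Bool =>
        (S.card:ℝ)/2 + t ≤ ((S.filter (fun i => b i = true)).card : ℝ)) with hF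
    have lower : (F.card : ℝ) * Real.exp (s*((m:ℝ)/2+t))
        ≤ ∑ b : Fin n → Bool, Real.exp (s * ((S.filter (fun i => b i = true)).card : ℝ)) := by
      have h1 : (F.card : ℝ) * Real.exp (s*((m:ℝ)/2+t))
          = ∑ _b ∈ F, Real.exp (s*((m:ℝ)/2+t)) := by
        rw [Finset.sum_const]; ring
      rw [h1]
      apply le_trans (Finset.sum_le_sum (fun b hb => ?_))
        (Finset.sum_le_sum_of_subset_of_nonneg (Finset.subset_univ F)
          (fun b _ _ => (Real.exp_pos _).le))
      apply Real.exp_le_exp.2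
      apply mul_le_mul_of_nonneg_left _ hs.le
      exact (Finset.mem_filter.1 hb).2
    rw [mgf_id] at lower
    have hcosh : Real.cosh (s/2) ^ m ≤ Real.exp ((m:ℝ) * s^2 / 8) := by
      calc Real.cosh (s/2) ^ m ≤ (Real.exp ((s/2)^2/2)) ^ m :=
            pow_le_pow_left₀ (Real.cosh_pos (x := s/2)).le (Real.cosh_le_exp_half_sq _) m
        _ = Real.exp ((m:ℝ) * s^2/8) := by
            rw [← Real.exp_nat_mul]; ring_nf
    have key : (F.card:ℝ) = ((F.card:ℝ) * Real.exp (s*((m:ℝ)/2+t))) * Real.exp (-(s*((m:ℝ)/2+t))) := by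
      rw [mul_assoc, ← Real.exp_add]; simp
    have h2 : (F.card:ℝ) ≤ (2^n * Real.exp (s * (m:ℝ) / 2) * Real.exp ((m:ℝ)*s^2/8)) * Real.exp (-(s*((m:ℝ)/2+t))) := by
      rw [key]
      apply mul_le_mul_of_nonneg_right _ (Real.exp_pos _).le
      refine le_trans lower ?_
      rw [mul_assoc, mul_assoc]
      apply mul_le_mul_of_nonneg_left _ (by positivity : (0:ℝ) ≤ (2:ℝ)^n)
      exact mul_le_mul_of_nonneg_left hcosh (Real.exp_pos _).le
    calc (F.card:ℝ) ≤ _ := h2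
      _ = 2^n * Real.exp (s * (m:ℝ) / 2 + (m:ℝ)*s^2/8 + -(s*((m:ℝ)/2+t))) := by
          rw [Real.exp_add, Real.exp_add]; ring
      _ = 2^n * Real.exp (-2*t^2/(m:ℝ)) := by
          congr 1
          congr 1
          rw [hsdef]
          field_simp
          ring
      _ ≤ 2^n * Real.exp (-2*t^2/(n:ℝ)) := by
          apply mul_le_mul_of_nonneg_left _ (by positivity : (0:ℝ) ≤ (2:ℝ)^n)
          apply Real.exp_le_exp.2
          rw [neg_mul, neg_div, neg_div, neg_le_neg_iff]
          apply div_le_div_of_nonneg_left (by positivity) hm0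
          exact_mod_cast hmn

lemma tail_abs (n : ℕ) (S : Finset (Fin n)) (t : ℝ) (ht : 0 < t) :
    (((univ.filter (fun b : Fin n → Bool =>
        t < |((S.filter (fun i => b i = true)).card : ℝ) - (S.card:ℝ)/2|)).card : ℝ))
      ≤ 2 * (2^n * Real.exp (-2*t^2/n)) := by
  set W : (Fin n → Bool) → ℝ := fun b => ((S.filter (fun i => b i = true)).card : ℝ) with hW
  set m : ℝ := (S.card : ℝ) with hm
  set F1 := univ.filter (fun b : Fin n → Bool => m/2 + t ≤ W b) with hF1
  set F2 := univ.filter (fun b : Fin n → Bool => t < m/2 - W b) with hF2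
  have hsub : univ.filter (fun b : Fin n → Bool => t < |W b - m/2|) ⊆ F1 ∪ F2 := by
    intro b hb
    rw [Finset.mem_filter] at hb
    rw [Finset.mem_union, hF1, hF2, Finset.mem_filter, Finset.mem_filter]
    rcases abs_cases (W b - m/2) with ⟨h, _⟩ | ⟨h, _⟩
    · left; exact ⟨Finset.mem_univ _, by linarith [hb.2, h ▸ hb.2]⟩
    · right; refine ⟨Finset.mem_univ _, ?_⟩; rw [h] at hb; linarith [hb.2]
  have hcompl : ∀ b : Fin n → Bool, W (fun i => !(b i)) = m - W b := by
    intro b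
    have := Finset.card_filter_add_card_filter_not (s := S) (p := fun i => b i = true)
    have hneg : S.filter (fun i => (!(b i)) = true) = S.filter (fun i => ¬ (b i = true)) := by
      apply Finset.filter_congr; intro i _; simp
    rw [hW, hm]
    simp only [hneg]
    push_cast [← this]
    ring
  have h21 : F2.card ≤ F1.card := by
    apply Finset.card_le_card_of_injOn (fun b => (fun i => !(b i)))
    · intro b hb
      rw [hF2, Finset.mem_coe, Finset.mem_filter] at hb
      rw [hF1, Finset.mem_coe, Finset.mem_filter]
      refine ⟨Finset.mem_univ _, ?_⟩
      rw [hcompl b]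
      linarith [hb.2]
    · intro b _ b' _ h
      funext i
      have := congrFun h i
      simpa using this
  calc (((univ.filter (fun b : Fin n → Bool => t < |W b - m/2|)).card : ℝ))
      ≤ ((F1 ∪ F2).card : ℝ) := by exact_mod_cast Finset.card_le_card hsub
    _ ≤ (F1.card : ℝ) + (F2.card : ℝ) := by exact_mod_cast Finset.card_union_le _ _
    _ ≤ (F1.card : ℝ) + (F1.card : ℝ) := by
        have : (F2.card : ℝ) ≤ (F1.card:ℝ) := by exact_mod_cast h21
        linarith
    _ ≤ 2 * (2^n * Real.exp (-2*t^2/n)) := by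
        have := tail_upper n S t ht
        rw [hF1]
        linarith [this]

lemma snoc_row_iff {n j : ℕ} (f : Fin j → (Fin n → Bool)) (b : Fin n → Bool)
    (z' : Fin (j+1) → Bool) (i : Fin n) :
    (∀ j', (Fin.snoc f b : Fin (j+1) → (Fin n → Bool)) j' i = z' j') ↔
      ((∀ j'', f j'' i = Fin.init z' j'') ∧ b i = z' (Fin.last j)) := by
  constructor
  · intro h
    refine ⟨fun j'' => ?_, ?_⟩
    · have h1 := h (Fin.castSucc j'')
      rw [Fin.snoc_castSucc] at h1
      exact h1
    · have h1 := h (Fin.last j)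
      rwa [Fin.snoc_last] at h1
  · rintro ⟨h1, h2⟩ j'
    refine Fin.lastCases ?_ ?_ j'
    · rwa [Fin.snoc_last]
    · intro i'
      rw [Fin.snoc_castSucc]
      exact h1 i'

lemma main_ind (n k : ℕ) (hn : 1 ≤ n) (ε : ℝ) (hε0 : 0 < ε) (B : Finset (Fin n → Bool))
    (hB : (2:ℝ)^(k+1) * ((n:ℝ)+1) * (2:ℝ)^((1-ε)*(n:ℝ)) ≤ (B.card : ℝ)) :
    ∀ j, j ≤ k → ((B.card:ℝ)/2)^j ≤ ((univ.filter (fun f : Fin j → (Fin n → Bool) =>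
      (∀ i, f i ∈ B) ∧ ∀ z : Fin j → Bool,
        |((univ.filter (fun i : Fin n => ∀ j', f j' i = z j')).card : ℝ) - (n:ℝ)/2^j|
          ≤ Real.sqrt ε * (2 - 2/2^j) * (n:ℝ))).card : ℝ) := by
  intro j
  induction j with
  | zero =>
    intro _
    have : (univ.filter (fun f : Fin 0 → (Fin n → Bool) =>
      (∀ i, f i ∈ B) ∧ ∀ z : Fin 0 → Bool,
        |((univ.filter (fun i : Fin n => ∀ j', f j' i = z j')).card : ℝ) - (n:ℝ)/2^0|
          ≤ Real.sqrt ε * (2 - 2/2^0) * (n:ℝ))) = univ := by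
      apply Finset.filter_true_of_mem
      intro f _
      refine ⟨fun i => i.elim0, fun z => ?_⟩
      have h1 : (univ.filter (fun i : Fin n => ∀ j' : Fin 0, f j' i = z j')) = univ := by
        apply Finset.filter_true_of_mem; intro i _; exact fun j' => j'.elim0
      rw [h1]
      simp
    rw [this]
    simp

  | succ j ih =>
    intro hjk
    have hjk' : j ≤ k := Nat.le_of_succ_le hjk
    have Hj := ih hjk'
    have hn0 : (0:ℝ) < n := by exact_mod_cast hn
    have hsq : (0:ℝ) < Real.sqrt ε := Real.sqrt_pos.2 hε0
    set Gj := univ.filter (fun f : Fin j → (Fin n → Bool) =>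
      (∀ i, f i ∈ B) ∧ ∀ z : Fin j → Bool,
        |((univ.filter (fun i : Fin n => ∀ j', f j' i = z j')).card : ℝ) - (n:ℝ)/2^j|
          ≤ Real.sqrt ε * (2 - 2/2^j) * (n:ℝ)) with hGj
    set Q : (Fin j → (Fin n → Bool)) → (Fin n → Bool) → Prop := fun f b =>
      ∀ z : Fin (j+1) → Bool,
        |((univ.filter (fun i : Fin n =>
            ∀ j', (Fin.snoc f b : Fin (j+1) → (Fin n → Bool)) j' i = z j')).card : ℝ)
            - (n:ℝ)/2^(j+1)|
          ≤ Real.sqrt ε * (2 - 2/2^(j+1)) * (n:ℝ) with hQdef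
    -- few bad extensions
    have hbad : ∀ f : Fin j → (Fin n → Bool), f ∈ Gj →
        ((B.filter (fun b => ¬ Q f b)).card : ℝ) ≤ (B.card:ℝ)/2 := by
      intro f hf
      rw [hGj, Finset.mem_filter] at hf
      obtain ⟨-, -, hf2⟩ := hf
      set S : (Fin j → Bool) → Finset (Fin n) :=
        fun z => univ.filter (fun i => ∀ j', f j' i = z j') with hS
      have hsubbad : B.filter (fun b => ¬ Q f b) ⊆
          (univ : Finset (Fin j → Bool)).biUnion (fun z =>
            univ.filter (fun b : Fin n → Bool =>
              Real.sqrt ε * n <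
                |(((S z).filter (fun i => b i = true)).card : ℝ) - ((S z).card:ℝ)/2|)) := by
        intro b hb
        rw [Finset.mem_filter] at hb
        obtain ⟨hbB, hnq⟩ := hb
        simp only [hQdef, not_forall, not_le] at hnq
        obtain ⟨z', hz'⟩ := hnq
        rw [Finset.mem_biUnion]
        refine ⟨Fin.init z', Finset.mem_univ _, ?_⟩
        rw [Finset.mem_filter]
        refine ⟨Finset.mem_univ _, ?_⟩
        -- notation
        set m : ℝ := (((S (Fin.init z')).card : ℕ) : ℝ) with hm
        set W : ℝ := ((((S (Fin.init z')).filter (fun i => b i = true)).card : ℕ) : ℝ) with hWd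
        -- split the count
        have hsplit : univ.filter (fun i : Fin n =>
            ∀ j', (Fin.snoc f b : Fin (j+1) → (Fin n → Bool)) j' i = z' j')
            = (S (Fin.init z')).filter (fun i => b i = z' (Fin.last j)) := by
          rw [hS, Finset.filter_filter]
          apply Finset.filter_congr
          intro i _
          simp only [snoc_row_iff]
        rw [hsplit] at hz'
        -- the count N in terms of W
        have hNW : ((((S (Fin.init z')).filter (fun i => b i = z' (Fin.last j))).card : ℕ) : ℝ)
            = if z' (Fin.last j) then W else m - W := by
          cases hc : z' (Fin.last j) with
          | true => simp [hWd]
          | false =>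
            simp only [Bool.false_eq_true, if_false]
            have hcompl := Finset.card_filter_add_card_filter_not
              (s := S (Fin.init z')) (p := fun i => b i = true)
            have hneg : (S (Fin.init z')).filter (fun i => ¬ (b i = true))
                = (S (Fin.init z')).filter (fun i => b i = false) := by
              apply Finset.filter_congr; intro i _; simp
            rw [hneg] at hcompl
            rw [hm, hWd]
            have : (((S (Fin.init z')).filter (fun i => b i = false)).card : ℝ)
                = ((S (Fin.init z')).card : ℝ)
                  - (((S (Fin.init z')).filter (fun i => b i = true)).card : ℝ) := by
              have := hcompl
              push_cast [← this]
              ring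
            rw [this]
        -- good prefix bound
        have hpre : |m - (n:ℝ)/2^j| ≤ Real.sqrt ε * (2 - 2/2^j) * (n:ℝ) := hf2 (Fin.init z')
        -- arithmetic
        have h2j : ((2:ℝ)^(j+1)) = 2 * 2^j := by ring
        have hhalf : (n:ℝ)/2^(j+1) = ((n:ℝ)/2^j)/2 := by
          rw [h2j]; ring
        have hgam : Real.sqrt ε * (2 - 2/2^(j+1)) * (n:ℝ)
            = Real.sqrt ε * n + (Real.sqrt ε * (2 - 2/2^j) * (n:ℝ))/2 := by
          rw [h2j]
          have h2jpos : (0:ℝ) < 2^j := by positivity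
          field_simp
          ring
        set N : ℝ := ((((S (Fin.init z')).filter (fun i => b i = z' (Fin.last j))).card : ℕ) : ℝ)
          with hNd
        have hz'' : Real.sqrt ε * (2 - 2/2^(j+1)) * (n:ℝ) < |N - (n:ℝ)/2^(j+1)| := hz'
        have htri : |N - (n:ℝ)/2^(j+1)| ≤ |N - m/2| + |m - (n:ℝ)/2^j|/2 := by
          have := abs_sub_le N (m/2) ((n:ℝ)/2^(j+1))
          have heq : |m/2 - (n:ℝ)/2^(j+1)| = |m - (n:ℝ)/2^j|/2 := by
            rw [hhalf]
            rw [show m/2 - ((n:ℝ)/2^j)/2 = (m - (n:ℝ)/2^j)/2 by ring]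
            rw [abs_div]
            norm_num
          rw [heq] at this
          exact this
        have hNm : |N - m/2| = |W - m/2| := by
          rw [hNW]
          cases hc : z' (Fin.last j) with
          | true => rw [if_pos rfl]
          | false =>
            rw [if_neg (by simp)]
            rw [show m - W - m/2 = -(W - m/2) by ring, abs_neg]
        rw [hNm] at htri
        have : Real.sqrt ε * n < |W - m/2| := by
          rw [hgam] at hz''
          linarith [hz'', htri, hpre]
        exact this
      -- cardinality of the bad set
      have hcard : ((B.filter (fun b => ¬ Q f b)).card : ℝ)
          ≤ 2^j * (2 * (2^n * Real.exp (-(2*ε*n)))) := by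
        have h1 : (B.filter (fun b => ¬ Q f b)).card
            ≤ ∑ z : Fin j → Bool, (univ.filter (fun b : Fin n → Bool =>
              Real.sqrt ε * n <
                |(((S z).filter (fun i => b i = true)).card : ℝ) - ((S z).card:ℝ)/2|)).card :=
          le_trans (Finset.card_le_card hsubbad) (Finset.card_biUnion_le)
        have h2 : ∀ z : Fin j → Bool, ((univ.filter (fun b : Fin n → Bool =>
              Real.sqrt ε * n <
                |(((S z).filter (fun i => b i = true)).card : ℝ) - ((S z).card:ℝ)/2|)).card : ℝ)
            ≤ 2 * (2^n * Real.exp (-(2*ε*n))) := by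
          intro z
          have ht : (0:ℝ) < Real.sqrt ε * n := by positivity
          have := tail_abs n (S z) (Real.sqrt ε * n) ht
          have hexp : -2*(Real.sqrt ε * n)^2/(n:ℝ) = -(2*ε*n) := by
            rw [mul_pow, Real.sq_sqrt hε0.le]
            field_simp
          rw [hexp] at this
          exact this
        calc ((B.filter (fun b => ¬ Q f b)).card : ℝ)
            ≤ ∑ z : Fin j → Bool, ((univ.filter (fun b : Fin n → Bool =>
              Real.sqrt ε * n <
                |(((S z).filter (fun i => b i = true)).card : ℝ) - ((S z).card:ℝ)/2|)).card : ℝ) := by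
              exact_mod_cast h1
          _ ≤ ∑ _z : Fin j → Bool, (2 * (2^n * Real.exp (-(2*ε*n)))) :=
              Finset.sum_le_sum (fun z _ => h2 z)
          _ = 2^j * (2 * (2^n * Real.exp (-(2*ε*n)))) := by
              rw [Finset.sum_const]
              simp [Fintype.card_fun]
      -- final arithmetic
      have harith : (2:ℝ)^j * (2 * (2^n * Real.exp (-(2*ε*n)))) ≤ (B.card:ℝ)/2 := by
        have hrpow : (2:ℝ)^((1-ε)*(n:ℝ)) = 2^n * Real.exp (Real.log 2 * (-(ε*n))) := by
          rw [show (1-ε)*(n:ℝ) = (n:ℝ) + (-(ε*(n:ℝ))) by ring, Real.rpow_add two_pos,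
            Real.rpow_natCast, Real.rpow_def_of_pos two_pos]
        have hlog : Real.exp (-(2*ε*n)) ≤ Real.exp (Real.log 2 * (-(ε*n))) := by
          apply Real.exp_le_exp.2
          have hl2 : Real.log 2 ≤ 1 := by
            have := Real.log_le_sub_one_of_pos (by norm_num : (0:ℝ) < 2)
            linarith
          have hεn : (0:ℝ) < ε * n := mul_pos hε0 hn0
          nlinarith [mul_le_mul_of_nonneg_right hl2 hεn.le, hεn]
        have hpow : (2:ℝ)^j * 2 ≤ 2^k := by
          rw [show (2:ℝ)^j * 2 = 2^(j+1) by ring]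
          exact pow_le_pow_right₀ one_le_two hjk
        have hBhalf : (2:ℝ)^k * ((n:ℝ)+1) * (2:ℝ)^((1-ε)*(n:ℝ)) ≤ (B.card:ℝ)/2 := by
          rw [le_div_iff₀ (by norm_num : (0:ℝ) < 2)]
          calc (2:ℝ)^k * ((n:ℝ)+1) * (2:ℝ)^((1-ε)*(n:ℝ)) * 2
              = (2:ℝ)^(k+1) * ((n:ℝ)+1) * (2:ℝ)^((1-ε)*(n:ℝ)) := by ring
            _ ≤ (B.card:ℝ) := hB
        calc (2:ℝ)^j * (2 * (2^n * Real.exp (-(2*ε*n))))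
            ≤ (2:ℝ)^k * (2^n * Real.exp (Real.log 2 * (-(ε*n)))) := by
              rw [show (2:ℝ)^j * (2 * (2^n * Real.exp (-(2*ε*n))))
                = ((2:ℝ)^j * 2) * (2^n * Real.exp (-(2*ε*n))) by ring]
              apply mul_le_mul hpow ?_ (by positivity) (by positivity)
              exact mul_le_mul_of_nonneg_left hlog (by positivity)
          _ ≤ (2:ℝ)^k * (((n:ℝ)+1) * (2^n * Real.exp (Real.log 2 * (-(ε*n))))) := by
              apply mul_le_mul_of_nonneg_left _ (by positivity)
              have hX : (0:ℝ) < 2^n * Real.exp (Real.log 2 * (-(ε*(n:ℝ)))) := by positivity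
              nlinarith [mul_nonneg hn0.le hX.le]
          _ = (2:ℝ)^k * ((n:ℝ)+1) * (2:ℝ)^((1-ε)*(n:ℝ)) := by
              rw [hrpow]; ring
          _ ≤ (B.card:ℝ)/2 := hBhalf
      exact le_trans hcard harith
    -- many good extensions
    have hExt : ∀ f ∈ Gj, (B.card:ℝ)/2 ≤ ((B.filter (Q f)).card : ℝ) := by
      intro f hf
      have hsum := Finset.card_filter_add_card_filter_not
        (s := B) (p := Q f)
      have := hbad f hf
      have hcast : ((B.filter (Q f)).card : ℝ) + ((B.filter (fun b => ¬ Q f b)).card : ℝ)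
          = (B.card : ℝ) := by exact_mod_cast hsum
      linarith
    -- injection of sigma into G(j+1)
    have hinj : (((Gj.sigma (fun f => B.filter (Q f))).card : ℕ) : ℝ)
        ≤ ((univ.filter (fun f : Fin (j+1) → (Fin n → Bool) =>
          (∀ i, f i ∈ B) ∧ ∀ z : Fin (j+1) → Bool,
            |((univ.filter (fun i : Fin n => ∀ j', f j' i = z j')).card : ℝ) - (n:ℝ)/2^(j+1)|
              ≤ Real.sqrt ε * (2 - 2/2^(j+1)) * (n:ℝ))).card : ℝ) := by
      have := Finset.card_le_card_of_injOn
        (f := fun p : (Σ _f : Fin j → (Fin n → Bool), (Fin n → Bool)) =>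
          (Fin.snoc p.1 p.2 : Fin (j+1) → (Fin n → Bool)))
        (s := Gj.sigma (fun f => B.filter (Q f)))
        (t := univ.filter (fun f : Fin (j+1) → (Fin n → Bool) =>
          (∀ i, f i ∈ B) ∧ ∀ z : Fin (j+1) → Bool,
            |((univ.filter (fun i : Fin n => ∀ j', f j' i = z j')).card : ℝ) - (n:ℝ)/2^(j+1)|
              ≤ Real.sqrt ε * (2 - 2/2^(j+1)) * (n:ℝ)))
        ?_ ?_
      · exact_mod_cast this
      · rintro ⟨f, b⟩ hp
        rw [Finset.mem_coe, Finset.mem_sigma] at hp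
        obtain ⟨hfG, hbE⟩ := hp
        rw [Finset.mem_filter] at hbE
        obtain ⟨hbB, hQfb⟩ := hbE
        rw [Finset.mem_coe, Finset.mem_filter]
        refine ⟨Finset.mem_univ _, ?_, ?_⟩
        · intro i
          refine Fin.lastCases ?_ ?_ i
          · show (Fin.snoc f b : Fin (j+1) → (Fin n → Bool)) (Fin.last j) ∈ B
            rwa [Fin.snoc_last]
          · intro i'
            show (Fin.snoc f b : Fin (j+1) → (Fin n → Bool)) (Fin.castSucc i') ∈ B
            rw [Fin.snoc_castSucc]
            rw [hGj, Finset.mem_filter] at hfG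
            exact hfG.2.1 i'
        · exact hQfb
      · rintro ⟨f, b⟩ _ ⟨f', b'⟩ _ heq
        simp only at heq
        have h1 : f = f' := by
          funext i
          have := congrFun heq (Fin.castSucc i)
          rwa [Fin.snoc_castSucc, Fin.snoc_castSucc] at this
        subst h1
        have h2 : b = b' := by
          have := congrFun heq (Fin.last j)
          rwa [Fin.snoc_last, Fin.snoc_last] at this
        subst h2
        rfl
    -- put it together
    have hsigma : ((Gj.sigma (fun f => B.filter (Q f))).card : ℝ)
        = ∑ f ∈ Gj, ((B.filter (Q f)).card : ℝ) := by
      rw [Finset.card_sigma]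
      push_cast
      rfl
    calc ((B.card:ℝ)/2)^(j+1)
        = ((B.card:ℝ)/2)^j * ((B.card:ℝ)/2) := by ring
      _ ≤ (Gj.card : ℝ) * ((B.card:ℝ)/2) := by
          apply mul_le_mul_of_nonneg_right Hj (by positivity)
      _ = ∑ _f ∈ Gj, ((B.card:ℝ)/2) := by rw [Finset.sum_const]; ring
      _ ≤ ∑ f ∈ Gj, ((B.filter (Q f)).card : ℝ) := Finset.sum_le_sum hExt
      _ = ((Gj.sigma (fun f => B.filter (Q f))).card : ℝ) := hsigma.symm
      _ ≤ _ := hinj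

end Aux

/-- Let `k ≥ 1`, `ε ∈ (0, 1/4^{k+2})`, `γ := 4√ε`, `n ≥ 1`, and let
`B ⊆ {0,1}^n` with `|B| ≥ 2^{k+1}·(n+1)·2^{(1−ε)n}`. Then the number of `k`-tuples
`(b_1,…,b_k) ∈ B^k` such that every pattern `z ∈ {0,1}^k` occurs as a row of the
`n × k` matrix `(b_1,…,b_k)` between `n/2^k − γn` and `n/2^k + γn` times is at least
`(|B|/2)^k`. -/
theorem stmt_11 (k : ℕ) (hk : 1 ≤ k) (ε : ℝ) (hε0 : 0 < ε)
    (hε1 : ε < 1 / 4^(k+2)) (n : ℕ) (hn : 1 ≤ n)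
    (B : Finset (Fin n → Bool))
    (hB : (2:ℝ)^(k+1) * ((n:ℝ) + 1) * (2:ℝ) ^ ((1 - ε) * (n:ℝ)) ≤ (B.card : ℝ)) :
    ((B.card : ℝ) / 2)^k ≤
      (Nat.card {f : Fin k → (Fin n → Bool) // (∀ j, f j ∈ B) ∧
        ∀ z : Fin k → Bool,
          (n:ℝ)/2^k - (4 * Real.sqrt ε) * n ≤
            ((Finset.univ.filter (fun i : Fin n => ∀ j, f j i = z j)).card : ℝ) ∧
          ((Finset.univ.filter (fun i : Fin n => ∀ j, f j i = z j)).card : ℝ) ≤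
            (n:ℝ)/2^k + (4 * Real.sqrt ε) * n} : ℝ) := by
  classical
  have hmain := main_ind n k hn ε hε0 B hB k le_rfl
  have hcard : (Nat.card {f : Fin k → (Fin n → Bool) // (∀ j, f j ∈ B) ∧
        ∀ z : Fin k → Bool,
          (n:ℝ)/2^k - (4 * Real.sqrt ε) * n ≤
            ((Finset.univ.filter (fun i : Fin n => ∀ j, f j i = z j)).card : ℝ) ∧
          ((Finset.univ.filter (fun i : Fin n => ∀ j, f j i = z j)).card : ℝ) ≤
            (n:ℝ)/2^k + (4 * Real.sqrt ε) * n} : ℕ)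
      = (univ.filter (fun f : Fin k → (Fin n → Bool) => (∀ j, f j ∈ B) ∧
        ∀ z : Fin k → Bool,
          (n:ℝ)/2^k - (4 * Real.sqrt ε) * n ≤
            ((Finset.univ.filter (fun i : Fin n => ∀ j, f j i = z j)).card : ℝ) ∧
          ((Finset.univ.filter (fun i : Fin n => ∀ j, f j i = z j)).card : ℝ) ≤
            (n:ℝ)/2^k + (4 * Real.sqrt ε) * n)).card := by
    rw [Nat.card_eq_fintype_card, Fintype.card_subtype]
  have hsub : (univ.filter (fun f : Fin k → (Fin n → Bool) =>
      (∀ i, f i ∈ B) ∧ ∀ z : Fin k → Bool,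
        |((univ.filter (fun i : Fin n => ∀ j', f j' i = z j')).card : ℝ) - (n:ℝ)/2^k|
          ≤ Real.sqrt ε * (2 - 2/2^k) * (n:ℝ)))
      ⊆ (univ.filter (fun f : Fin k → (Fin n → Bool) => (∀ j, f j ∈ B) ∧
        ∀ z : Fin k → Bool,
          (n:ℝ)/2^k - (4 * Real.sqrt ε) * n ≤
            ((Finset.univ.filter (fun i : Fin n => ∀ j, f j i = z j)).card : ℝ) ∧
          ((Finset.univ.filter (fun i : Fin n => ∀ j, f j i = z j)).card : ℝ) ≤
            (n:ℝ)/2^k + (4 * Real.sqrt ε) * n)) := by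
    intro f hf
    rw [Finset.mem_filter] at hf ⊢
    obtain ⟨hu, h1, h2⟩ := hf
    refine ⟨hu, h1, fun z => ?_⟩
    have h3 := h2 z
    rw [abs_le] at h3
    have hsq : (0:ℝ) ≤ Real.sqrt ε := Real.sqrt_nonneg _
    have hn0 : (0:ℝ) ≤ (n:ℝ) := Nat.cast_nonneg _
    have hp : (0:ℝ) < 2^k := by positivity
    have hgle : Real.sqrt ε * (2 - 2/2^k) * (n:ℝ) ≤ (4 * Real.sqrt ε) * n := by
      have h4 : (2:ℝ) - 2/2^k ≤ 4 := by
        have h5 : (0:ℝ) < 2/2^k := by positivity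
        linarith
      nlinarith [mul_nonneg hsq hn0]
    constructor <;> nlinarith [h3.1, h3.2, hgle]
  rw [hcard]
  calc ((B.card : ℝ) / 2)^k ≤ _ := hmain
    _ ≤ _ := by exact_mod_cast Finset.card_le_card hsub
end

section
/- Let n ≥ 1 and let w : {1,…,n} → ℕ with max_i w(i) ≥ 1. Set l := 1 + ⌈log₂(max_i w(i))⌉ and, for s ∈ {0,…,l}, define the s-pruned weights w_s(i) := ⌊w(i)/2^{l−s}⌋. Then for every s ∈ {1,…,l}: (1/(3n))·|w_s(2^{[n]})| ≤ |w_{s−1}(2^{[n]})| ≤ (3n/2)·|w_s(2^{[n]})|. -/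
open Finset in
lemma halve_key (n : ℕ) (v : Fin n → ℕ) :
    ((Finset.univ : Finset (Finset (Fin n))).image (fun X => ∑ i ∈ X, v i)).card ≤
      (n + 1) * ((Finset.univ : Finset (Finset (Fin n))).image (fun X => ∑ i ∈ X, v i / 2)).card ∧
    ((Finset.univ : Finset (Finset (Fin n))).image (fun X => ∑ i ∈ X, v i / 2)).card ≤
      (n / 2 + 1) * ((Finset.univ : Finset (Finset (Fin n))).image (fun X => ∑ i ∈ X, v i)).card := by
  classical
  set f : Finset (Fin n) → ℕ := fun X => ∑ i ∈ X, v i with hf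
  set g : Finset (Fin n) → ℕ := fun X => ∑ i ∈ X, v i / 2 with hg
  have hfg : ∀ X : Finset (Fin n), 2 * g X ≤ f X ∧ f X ≤ 2 * g X + n := by
    intro X
    have hcard : X.card ≤ n := by
      have := Finset.card_le_card (Finset.subset_univ X)
      simpa using this
    constructor
    · calc 2 * g X = ∑ i ∈ X, 2 * (v i / 2) := by rw [hg, Finset.mul_sum]
        _ ≤ ∑ i ∈ X, v i := Finset.sum_le_sum fun i _ => by omega
    · calc f X ≤ ∑ i ∈ X, (2 * (v i / 2) + 1) := Finset.sum_le_sum fun i _ => by omega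
        _ = 2 * g X + X.card := by
            rw [Finset.sum_add_distrib, Finset.sum_const, smul_eq_mul, mul_one, hg,
              Finset.mul_sum]
        _ ≤ 2 * g X + n := by omega
  set A := (Finset.univ : Finset (Finset (Fin n))).image f with hA
  set B := (Finset.univ : Finset (Finset (Fin n))).image g with hB
  let ψ : ℕ → Finset (Fin n) := fun a => if h : ∃ X : Finset (Fin n), f X = a then h.choose else ∅
  have hψ : ∀ a : ℕ, (∃ X : Finset (Fin n), f X = a) → f (ψ a) = a := by
    intro a h
    simp only [ψ, dif_pos h]
    exact h.choose_spec
  let φ : ℕ → Finset (Fin n) := fun b => if h : ∃ X : Finset (Fin n), g X = b then h.choose else ∅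
  have hφ : ∀ b : ℕ, (∃ X : Finset (Fin n), g X = b) → g (φ b) = b := by
    intro b h
    simp only [φ, dif_pos h]
    exact h.choose_spec
  constructor
  · apply Finset.card_le_mul_card_image_of_maps_to (f := fun a => g (ψ a)) (t := B)
    · intro a _
      exact Finset.mem_image_of_mem g (Finset.mem_univ (ψ a))
    · intro b _
      calc #{a ∈ A | g (ψ a) = b} ≤ (Finset.Icc (2 * b) (2 * b + n)).card := by
            apply Finset.card_le_card
            intro a ha
            rw [Finset.mem_filter] at ha
            obtain ⟨haA, hab⟩ := ha
            obtain ⟨X, _, hX⟩ := Finset.mem_image.mp haA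
            have h1 := hψ a ⟨X, hX⟩
            have h2 := hfg (ψ a)
            rw [Finset.mem_Icc]
            omega
        _ ≤ n + 1 := by rw [Nat.card_Icc]; omega
  · apply Finset.card_le_mul_card_image_of_maps_to (f := fun b => f (φ b)) (t := A)
    · intro b _
      exact Finset.mem_image_of_mem f (Finset.mem_univ (φ b))
    · intro a _
      calc #{b ∈ B | f (φ b) = a} ≤ (Finset.Icc ((a - n + 1) / 2) (a / 2)).card := by
            apply Finset.card_le_card
            intro b hb
            rw [Finset.mem_filter] at hb
            obtain ⟨hbB, hba⟩ := hb
            obtain ⟨X, _, hX⟩ := Finset.mem_image.mp hbB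
            have h1 := hφ b ⟨X, hX⟩
            have h2 := hfg (φ b)
            rw [Finset.mem_Icc]
            omega
        _ ≤ n / 2 + 1 := by rw [Nat.card_Icc]; omega

/-- Let `w : {1,…,n} → ℕ` with `max_i w(i) ≥ 1`, let
`l := 1 + ⌈log₂(max_i w(i))⌉`, and for `s ∈ {0,…,l}` let `w_s(i) := ⌊w(i)/2^{l−s}⌋` be
the `s`-pruned weights. Then for every `s ∈ {1,…,l}` the numbers of distinct subset sums
satisfy `(1/(3n))·|w_s(2^{[n]})| ≤ |w_{s−1}(2^{[n]})| ≤ (3n/2)·|w_s(2^{[n]})|`. -/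
theorem stmt_14 (n : ℕ) (hn : 1 ≤ n) (w : Fin n → ℕ)
    (M : ℕ) (hM : M = Finset.univ.sup w) (hM1 : 1 ≤ M)
    (l : ℕ) (hl : l = 1 + Nat.clog 2 M)
    (s : ℕ) (hs1 : 1 ≤ s) (hsl : s ≤ l) :
    (1 / (3 * (n:ℝ))) *
        (((Finset.univ : Finset (Finset (Fin n))).image
          (fun X => ∑ i ∈ X, w i / 2^(l - s))).card : ℝ) ≤
      (((Finset.univ : Finset (Finset (Fin n))).image
          (fun X => ∑ i ∈ X, w i / 2^(l - (s-1)))).card : ℝ) ∧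
    (((Finset.univ : Finset (Finset (Fin n))).image
          (fun X => ∑ i ∈ X, w i / 2^(l - (s-1)))).card : ℝ) ≤
      (3 * (n:ℝ) / 2) *
        (((Finset.univ : Finset (Finset (Fin n))).image
          (fun X => ∑ i ∈ X, w i / 2^(l - s))).card : ℝ) := by
  have hexp : ∀ i : Fin n, w i / 2 ^ (l - (s - 1)) = (w i / 2 ^ (l - s)) / 2 := by
    intro i
    have h1 : l - (s - 1) = (l - s) + 1 := by omega
    rw [h1, pow_succ, ← Nat.div_div_eq_div_mul]
  have hBfun : (fun X : Finset (Fin n) => ∑ i ∈ X, w i / 2 ^ (l - (s - 1))) =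
      (fun X : Finset (Fin n) => ∑ i ∈ X, (w i / 2 ^ (l - s)) / 2) := by
    funext X
    exact Finset.sum_congr rfl fun i _ => hexp i
  rw [hBfun]
  obtain ⟨h1, h2⟩ := halve_key n (fun i => w i / 2 ^ (l - s))
  set cA := ((Finset.univ : Finset (Finset (Fin n))).image
      (fun X => ∑ i ∈ X, w i / 2 ^ (l - s))).card with hcA
  set cB := ((Finset.univ : Finset (Finset (Fin n))).image
      (fun X => ∑ i ∈ X, (w i / 2 ^ (l - s)) / 2)).card with hcB
  have hnR : (0:ℝ) < (n:ℝ) := by exact_mod_cast hn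
  constructor
  · rw [div_mul_eq_mul_div, one_mul, div_le_iff₀ (by positivity)]
    have hnat : cA ≤ cB * (3 * n) := by nlinarith [h1, Nat.one_le_iff_ne_zero.mp hn]
    exact_mod_cast hnat
  · have hhalf : ((n / 2 : ℕ) : ℝ) ≤ (n : ℝ) / 2 := by
      rw [le_div_iff₀ (by norm_num)]
      exact_mod_cast Nat.div_mul_le_self n 2
    have h2R : (cB : ℝ) ≤ ((n / 2 : ℕ) + 1) * (cA : ℝ) := by exact_mod_cast h2
    have hcAnn : (0:ℝ) ≤ (cA : ℝ) := by positivity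
    have h1R : (1:ℝ) ≤ (n:ℝ) := by exact_mod_cast hn
    nlinarith [h2R, hhalf, hcAnn, h1R]
end

section
/- Let n ≥ 1, m ≥ 2, 0 < α < 1/(4m), and let S_1,…,S_m be a partition of {1,…,n} that is α-balanced. Let k ≠ k' be indices in {1,…,m} such that |S_k| and |S_{k'}| are the two largest cardinalities, i.e., |S_j| ≤ min{|S_k|, |S_{k'}|} for every j ∉ {k, k'}. Then either both |S_k| ∈ [n/2 − αn, n/2 + αn] and |S_{k'}| ∈ [n/2 − αn, n/2 + αn], or |S_j| ≤ (1/2 − 1/(4m))·n for every j ∈ {1,…,m}. -/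
open Finset

lemma prefix_lemma {n m : ℕ} (hm : 2 ≤ m) (α : ℝ)
    (S : Fin m → Finset (Fin n))
    (hbal : ∀ π : Equiv.Perm (Fin m), ∃ b : Fin m,
      (n:ℝ)/2 - α * n ≤ (∑ j ∈ Finset.Iic b, ((S (π j)).card : ℝ)) ∧
      (∑ j ∈ Finset.Iic b, ((S (π j)).card : ℝ)) ≤ (n:ℝ)/2 + α * n)
    (i j : Fin m) (hij : i ≠ j) :
    ∃ r : ℝ, (n:ℝ)/2 - α*n ≤ r ∧ r ≤ (n:ℝ)/2 + α*n ∧ ((S i).card : ℝ) ≤ r ∧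
      (r = ((S i).card : ℝ) ∨ ((S i).card : ℝ) + ((S j).card : ℝ) ≤ r) := by
  have hz0lt : 0 < m := by omega
  have hz1lt : 1 < m := by omega
  set z0 : Fin m := ⟨0, hz0lt⟩ with hz0def
  set z1 : Fin m := ⟨1, hz1lt⟩ with hz1def
  have hz01 : z0 ≠ z1 := by simp [hz0def, hz1def, Fin.ext_iff]
  set σ : Equiv.Perm (Fin m) := Equiv.swap z0 i with hσdef
  have hσ0 : σ z0 = i := Equiv.swap_apply_left _ _
  set x : Fin m := σ.symm j with hxdef
  have hx0 : x ≠ z0 := by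
    intro h
    apply hij
    rw [← hσ0, ← h]
    simp [hxdef]
  set τ : Equiv.Perm (Fin m) := (Equiv.swap z1 x).trans σ with hτdef
  have hτ0 : τ z0 = i := by
    have h1 : Equiv.swap z1 x z0 = z0 :=
      Equiv.swap_apply_of_ne_of_ne hz01 (Ne.symm hx0)
    simp [hτdef, h1, hσ0]
  have hτ1 : τ z1 = j := by simp [hτdef, hxdef]
  obtain ⟨b, hb1, hb2⟩ := hbal τ
  refine ⟨_, hb1, hb2, ?_, ?_⟩
  · have h0b : z0 ∈ Finset.Iic b := by
      simp only [Finset.mem_Iic, Fin.le_def]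
      exact Nat.zero_le _
    have := Finset.single_le_sum (f := fun y => ((S (τ y)).card : ℝ))
      (fun a _ => by positivity) h0b
    simpa [hτ0] using this
  · by_cases hb0 : b = z0
    · left
      subst hb0
      have hIic : Finset.Iic z0 = {z0} := by
        ext y
        simp only [Finset.mem_Iic, Finset.mem_singleton, Fin.le_def, Fin.ext_iff, Fin.val_mk]
        have hz0v : (z0 : ℕ) = 0 := rfl
        omega
      rw [hIic, Finset.sum_singleton, hτ0]
    · right
      have h1b : z1 ≤ b := by
        rw [Fin.le_def]
        have hb : b.1 ≠ 0 := by
          intro h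
          exact hb0 (Fin.ext (by simpa [hz0def] using h))
        simp only [hz1def]
        omega
      have hsub : ({z0, z1} : Finset (Fin m)) ⊆ Finset.Iic b := by
        intro y hy
        simp only [Finset.mem_insert, Finset.mem_singleton] at hy
        rcases hy with h | h <;> subst h <;> simp only [Finset.mem_Iic]
        · exact le_trans (by rw [Fin.le_def]; exact Nat.zero_le _) h1b
        · exact h1b
      calc ((S i).card : ℝ) + ((S j).card : ℝ)
          = ∑ y ∈ ({z0, z1} : Finset (Fin m)), ((S (τ y)).card : ℝ) := by
            rw [Finset.sum_pair hz01, hτ0, hτ1]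
        _ ≤ _ := Finset.sum_le_sum_of_subset_of_nonneg hsub (fun _ _ _ => by positivity)

lemma total_lemma {n m : ℕ} (S : Fin m → Finset (Fin n))
    (hdisj : ∀ i j, i ≠ j → Disjoint (S i) (S j))
    (hcover : ∀ x : Fin n, ∃ i, x ∈ S i) :
    ∑ i, ((S i).card : ℝ) = n := by
  have h : ∑ i, (S i).card = n := by
    rw [← Finset.card_biUnion (fun i _ j _ hij => hdisj i j hij)]
    have hu : (Finset.univ.biUnion S) = Finset.univ := by
      ext y
      simp only [Finset.mem_biUnion, Finset.mem_univ, true_and, iff_true]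
      exact hcover y
    rw [hu, Finset.card_univ, Fintype.card_fin]
  exact_mod_cast congrArg (Nat.cast : ℕ → ℝ) h

lemma aux_main (n m : ℕ) (hn : 1 ≤ n) (hm : 2 ≤ m) (α : ℝ)
    (hα0 : 0 < α) (hα1 : α < 1 / (4 * m))
    (S : Fin m → Finset (Fin n))
    (hdisj : ∀ i j, i ≠ j → Disjoint (S i) (S j))
    (hcover : ∀ x : Fin n, ∃ i, x ∈ S i)
    (hbal : ∀ π : Equiv.Perm (Fin m), ∃ b : Fin m,
      (n:ℝ)/2 - α * n ≤ (∑ j ∈ Finset.Iic b, ((S (π j)).card : ℝ)) ∧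
      (∑ j ∈ Finset.Iic b, ((S (π j)).card : ℝ)) ≤ (n:ℝ)/2 + α * n)
    (k k' : Fin m) (hkk' : k ≠ k')
    (hmax : ∀ j, j ≠ k → j ≠ k' → (S j).card ≤ (S k').card)
    (hle : (S k').card ≤ (S k).card) :
    (((n:ℝ)/2 - α * n ≤ ((S k).card : ℝ) ∧ ((S k).card : ℝ) ≤ (n:ℝ)/2 + α * n) ∧
     ((n:ℝ)/2 - α * n ≤ ((S k').card : ℝ) ∧ ((S k').card : ℝ) ≤ (n:ℝ)/2 + α * n)) ∨
    (∀ j, ((S j).card : ℝ) ≤ (1/2 - 1/(4 * (m:ℝ))) * n) := by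
  have hmR : (2:ℝ) ≤ m := by exact_mod_cast hm
  have hnR : (1:ℝ) ≤ n := by exact_mod_cast hn
  have npos : (0:ℝ) < n := by linarith
  have hm0 : (m:ℝ) ≠ 0 := by positivity
  have h4m : (0:ℝ) < 4*m := by positivity
  have hcle : ((S k').card : ℝ) ≤ ((S k).card : ℝ) := by exact_mod_cast hle
  have htotal : ∑ i, ((S i).card : ℝ) = n := total_lemma S hdisj hcover
  have hupper : ∀ i, ((S i).card : ℝ) ≤ (n:ℝ)/2 + α*n := by
    intro i
    obtain ⟨j, hj⟩ := Fintype.exists_ne_of_one_lt_card (by simp; omega) i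
    obtain ⟨r, _, hr2, hr3, _⟩ := prefix_lemma hm α S hbal i j (Ne.symm hj)
    linarith
  by_cases hL : ((S k).card : ℝ) ≤ (1/2 - 1/(4*(m:ℝ))) * n
  · right
    intro j
    have hjk : ((S j).card : ℝ) ≤ ((S k).card : ℝ) := by
      by_cases h1 : j = k
      · subst h1; exact le_refl _
      · by_cases h2 : j = k'
        · subst h2; exact hcle
        · exact le_trans (by exact_mod_cast hmax j h1 h2) hcle
    linarith
  · push_neg at hL
    left
    have hupk := hupper k
    have hupk' := hupper k'
    have hcard2 : ({k, k'} : Finset (Fin m)).card = 2 := Finset.card_pair hkk'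
    have hsum2 : ∑ j ∈ Finset.univ \ {k, k'}, ((S j).card : ℝ)
        = n - ((S k).card : ℝ) - ((S k').card : ℝ) := by
      rw [Finset.sum_sdiff_eq_sub (Finset.subset_univ _), htotal, Finset.sum_pair hkk']
      ring
    have hcard2' : (Finset.univ \ ({k, k'} : Finset (Fin m))).card = m - 2 := by
      rw [Finset.card_sdiff_of_subset (Finset.subset_univ _), Finset.card_univ, Fintype.card_fin, hcard2]
    have hsum1 : ∑ j ∈ Finset.univ \ {k}, ((S j).card : ℝ) = n - ((S k).card : ℝ) := by
      rw [Finset.sum_sdiff_eq_sub (Finset.subset_univ _), htotal, Finset.sum_singleton]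
    have hcard1 : (Finset.univ \ ({k} : Finset (Fin m))).card = m - 1 := by
      rw [Finset.card_sdiff_of_subset (Finset.subset_univ _), Finset.card_univ, Fintype.card_fin,
        Finset.card_singleton]
    have hmcast2 : ((m - 2 : ℕ) : ℝ) = (m:ℝ) - 2 := by
      have h2 : (2:ℕ) ≤ m := hm
      push_cast [Nat.cast_sub h2]
      ring
    have hmcast1 : ((m - 1 : ℕ) : ℝ) = (m:ℝ) - 1 := by
      have h1 : (1:ℕ) ≤ m := by omega
      push_cast [Nat.cast_sub h1]
      ring
    have han : α*n < (1/(4*(m:ℝ)))*n := mul_lt_mul_of_pos_right hα1 npos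
    have hlok : (n:ℝ)/2 - α*n ≤ ((S k).card : ℝ) := by
      by_contra hlt
      push_neg at hlt
      by_cases hsum : (n:ℝ)/2 + α*n < ((S k).card : ℝ) + ((S k').card : ℝ)
      · obtain ⟨r, hr1, hr2, hr3, hr4⟩ := prefix_lemma hm α S hbal k k' hkk'
        rcases hr4 with h | h
        · rw [h] at hr1; linarith
        · linarith
      · push_neg at hsum
        have hbound : ∀ j ∈ Finset.univ \ ({k, k'} : Finset (Fin m)),
            ((S j).card : ℝ) ≤ ((S k').card : ℝ) := by
          intro j hj
          simp only [Finset.mem_sdiff, Finset.mem_univ, Finset.mem_insert,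
            Finset.mem_singleton, true_and, not_or] at hj
          exact_mod_cast hmax j hj.1 hj.2
        have hsle := Finset.sum_le_card_nsmul _ _ _ hbound
        rw [hcard2', nsmul_eq_mul, hmcast2, hsum2] at hsle
        have hck'lt : ((S k').card : ℝ) < (1/(4*(m:ℝ)))*n + (1/(4*(m:ℝ)))*n := by
          linarith
        have hstep : ((m:ℝ)-2) * ((S k').card : ℝ)
            ≤ ((m:ℝ)-2) * ((1/(4*(m:ℝ)))*n + (1/(4*(m:ℝ)))*n) :=
          mul_le_mul_of_nonneg_left hck'lt.le (by linarith)
        have heq : ((m:ℝ)-2) * ((1/(4*(m:ℝ)))*n + (1/(4*(m:ℝ)))*n)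
            = (n:ℝ)/2 - (1/(m:ℝ))*n := by
          field_simp
          ring
        have hfrac : (1/(4*(m:ℝ)))*n ≤ (1/(m:ℝ))*n := by
          apply mul_le_mul_of_nonneg_right _ npos.le
          rw [div_le_div_iff₀ (by positivity) (by positivity)]
          linarith
        rw [heq] at hstep
        linarith
    have hlok' : (n:ℝ)/2 - α*n ≤ ((S k').card : ℝ) := by
      by_contra hlt
      push_neg at hlt
      by_cases hM : 2*α*n < ((S k').card : ℝ)
      · obtain ⟨r, hr1, hr2, hr3, hr4⟩ := prefix_lemma hm α S hbal k' k hkk'.symm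
        rcases hr4 with h | h
        · rw [h] at hr1; linarith
        · linarith
      · push_neg at hM
        have hbound : ∀ j ∈ Finset.univ \ ({k} : Finset (Fin m)),
            ((S j).card : ℝ) ≤ ((S k').card : ℝ) := by
          intro j hj
          simp only [Finset.mem_sdiff, Finset.mem_univ, Finset.mem_singleton, true_and] at hj
          by_cases h2 : j = k'
          · subst h2; exact le_refl _
          · exact_mod_cast hmax j hj h2
        have hsle := Finset.sum_le_card_nsmul _ _ _ hbound
        rw [hcard1, nsmul_eq_mul, hmcast1, hsum1] at hsle
        have hstep : ((m:ℝ)-1) * ((S k').card : ℝ) ≤ ((m:ℝ)-1) * (2*α*n) :=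
          mul_le_mul_of_nonneg_left hM (by linarith)
        have h2' : α * (4*(m:ℝ)) < 1 := (lt_div_iff₀ h4m).mp hα1
        have h3 : α * (4*(m:ℝ)) * n < 1 * n := mul_lt_mul_of_pos_right h2' npos
        have hαn : (0:ℝ) ≤ α*n := by positivity
        nlinarith [hsle, hstep, hupk, h3, hαn]
    exact ⟨⟨hlok, hupk⟩, hlok', hupk'⟩

/-- Let `S_1,…,S_m` be an `α`-balanced partition of `{1,…,n}` with
`m ≥ 2` and `0 < α < 1/(4m)` (α-balanced: for every permutation `π` of the bins there is
`b` with `∑_{j≤b} |S_{π(j)}| ∈ [n/2 ± αn]`). Let `k ≠ k'` be indices of the two largest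
parts. Then either both `|S_k|, |S_{k'}| ∈ [n/2 ± αn]`, or `|S_j| ≤ (1/2 − 1/(4m))·n`
for every `j`. -/
theorem stmt_15 (n m : ℕ) (hn : 1 ≤ n) (hm : 2 ≤ m) (α : ℝ)
    (hα0 : 0 < α) (hα1 : α < 1 / (4 * m))
    (S : Fin m → Finset (Fin n))
    (hdisj : ∀ i j, i ≠ j → Disjoint (S i) (S j))
    (hcover : ∀ x : Fin n, ∃ i, x ∈ S i)
    (hbal : ∀ π : Equiv.Perm (Fin m), ∃ b : Fin m,
      (n:ℝ)/2 - α * n ≤ (∑ j ∈ Finset.Iic b, ((S (π j)).card : ℝ)) ∧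
      (∑ j ∈ Finset.Iic b, ((S (π j)).card : ℝ)) ≤ (n:ℝ)/2 + α * n)
    (k k' : Fin m) (hkk' : k ≠ k')
    (hmax : ∀ j, j ≠ k → j ≠ k' → (S j).card ≤ min (S k).card (S k').card) :
    (((n:ℝ)/2 - α * n ≤ ((S k).card : ℝ) ∧ ((S k).card : ℝ) ≤ (n:ℝ)/2 + α * n) ∧
     ((n:ℝ)/2 - α * n ≤ ((S k').card : ℝ) ∧ ((S k').card : ℝ) ≤ (n:ℝ)/2 + α * n)) ∨
    (∀ j, ((S j).card : ℝ) ≤ (1/2 - 1/(4 * (m:ℝ))) * n) := by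
  rcases le_total (S k').card (S k).card with h | h
  · exact aux_main n m hn hm α hα0 hα1 S hdisj hcover hbal k k' hkk'
      (fun j h1 h2 => (hmax j h1 h2).trans (min_le_right _ _)) h
  · rcases aux_main n m hn hm α hα0 hα1 S hdisj hcover hbal k' k hkk'.symm
      (fun j h1 h2 => (hmax j h2 h1).trans (min_le_left _ _)) h with ⟨h1, h2⟩ | hh
    · exact Or.inl ⟨h2, h1⟩
    · exact Or.inr hh
end
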